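/- arXiv:2210.01327 — 3 statements merged into one kernel-verified Lean document; each statement's English description precedes it below -/
import Mathlib

section
/- Let $G$ be a multigraph on vertex set $V$ with edge colouring $c : E \to Q$, and suppose $\ell \ge 1$ is the minimal integer for which there exists $I \subseteq Q$ with $|I| = \ell$ and $\kappa(C_I) \ge |Q| - \ell + 2$. Then for any such set $I$ with $|I|=\ell$ and $\kappa(C_I) \ge |Q| - \ell + 2$, the spanning subgraph $G_{C_I} = (V, C_I)$ has no bridges, i.e., there is no edge $e \in C_I$ whose removal increases the number of connected components of $(V, C_I)$. -/
/-!
Statement 4: Let `G` be a multigraph with edge colouring `c : E → Q`, and suppose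
`ℓ ≥ 1` is the minimal integer for which there exists `I ⊆ Q` with `|I| = ℓ` and
`κ(C_I) ≥ |Q| - ℓ + 2`. Then for any such `I`, the spanning subgraph `(V, C_I)` has no
bridges: no edge `e ∈ C_I` whose removal increases the number of connected components
of `(V, C_I)`.
-/

open Finset

attribute [local instance] Classical.propDecidable

namespace Stmt4

/-- The simple graph on `V` underlying a set `S` of edge indices. -/
def graphOf {V E : Type*} (ends : E → Sym2 V) (S : Finset E) : SimpleGraph V :=
  SimpleGraph.fromRel (fun u v => ∃ e ∈ S, ends e = s(u, v))

/-- The number of connected components of the graph spanned by the edge set `S`. -/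
noncomputable def kappa {V E : Type*} (ends : E → Sym2 V) (S : Finset E) : ℕ :=
  Nat.card (graphOf ends S).ConnectedComponent

/-- The set of edges whose colour belongs to `I`. -/
noncomputable def colourClass {E Q : Type*} [Fintype E] (c : E → Q) (I : Finset Q) :
    Finset E :=
  Finset.univ.filter (fun e => c e ∈ I)

lemma graphOf_mono {V E : Type*} (ends : E → Sym2 V) {S T : Finset E} (h : S ⊆ T) :
    graphOf ends S ≤ graphOf ends T := by
  intro u v hadj
  rw [graphOf, SimpleGraph.fromRel_adj] at hadj ⊢
  obtain ⟨hne, hor⟩ := hadj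
  refine ⟨hne, ?_⟩
  rcases hor with ⟨e, he, hx⟩ | ⟨e, he, hx⟩
  · exact Or.inl ⟨e, h he, hx⟩
  · exact Or.inr ⟨e, h he, hx⟩

lemma kappa_anti {V E : Type*} [Fintype V] (ends : E → Sym2 V) {S T : Finset E}
    (h : S ⊆ T) : kappa ends T ≤ kappa ends S := by
  have hle := graphOf_mono ends h
  apply Nat.card_le_card_of_surjective
    (SimpleGraph.ConnectedComponent.map (SimpleGraph.Hom.ofLE hle))
  intro C
  induction C using SimpleGraph.ConnectedComponent.ind with
  | _ v => exact ⟨(graphOf ends S).connectedComponentMk v, rfl⟩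

theorem no_bridges_at_minimal_level {V E Q : Type*} [Fintype V] [Fintype E] [Fintype Q]
    (ends : E → Sym2 V) (hends : ∀ e, ¬ (ends e).IsDiag) (c : E → Q)
    (ℓ : ℕ) (hℓ : 1 ≤ ℓ)
    (hmin : ∀ ℓ' < ℓ, ¬ ∃ I : Finset Q, I.card = ℓ' ∧
        Fintype.card Q + 2 - ℓ' ≤ kappa ends (colourClass c I))
    (I : Finset Q) (hI : I.card = ℓ)
    (hκ : Fintype.card Q + 2 - ℓ ≤ kappa ends (colourClass c I)) :
    ∀ e ∈ colourClass c I,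
      ¬ (kappa ends (colourClass c I) < kappa ends ((colourClass c I).erase e)) := by
  intro e he hlt
  have hq : c e ∈ I := by simpa [colourClass] using he
  have hsub : colourClass c (I.erase (c e)) ⊆ (colourClass c I).erase e := by
    intro e' he'
    simp only [colourClass, mem_filter, mem_univ, true_and, Finset.mem_erase] at he' ⊢
    exact ⟨fun h => he'.1 (h ▸ rfl), he'.2⟩
  have hmono := kappa_anti ends hsub
  refine hmin (ℓ - 1) (by omega) ⟨I.erase (c e), ?_, ?_⟩
  · rw [Finset.card_erase_of_mem hq, hI]
  · omega

end Stmt4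
end

section
/- Fix an integer $k \ge 2$. With high probability, every family of pairwise vertex-disjoint cycles in $G_{k-out}(n)$ consists of at most $3n \log(2k) / \log n$ cycles, where cycles of length 2 (a pair of parallel edges, arising when two vertices choose each other) are allowed and $\log$ denotes the natural logarithm. -/
/-!
Statement 6: Fix an integer `k ≥ 2`. W.h.p. every family of pairwise vertex-disjoint
cycles in `G_{k-out}(n)` consists of at most `3n·log(2k)/log n` cycles, where 2-cycles
(pairs of parallel edges, arising when two vertices choose each other) are allowed.

A cycle is represented by its vertex set `C`: either `C = {u, v}` with `u` and `v`
choosing each other (a 2-cycle), or `|C| ≥ 3` and the underlying simple graph contains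
a cycle whose vertex set is exactly `C`.
-/

open Finset

attribute [local instance] Classical.propDecidable

namespace Stmt6

/-- `f` is a valid family of choices: each vertex chooses `k` distinct other vertices. -/
def validChoices (n k : ℕ) (f : Fin n → Finset (Fin n)) : Prop :=
  ∀ i, (f i).card = k ∧ i ∉ f i

/-- The simple graph underlying `G_{k-out}` with choices `f`. -/
def underlying {n : ℕ} (f : Fin n → Finset (Fin n)) : SimpleGraph (Fin n) :=
  SimpleGraph.fromRel (fun u v => v ∈ f u)

/-- The vertex set `C` carries a cycle of the multigraph `G_{k-out}`: either a
2-cycle formed by a pair of parallel edges, or a cycle of length at least 3 of the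
underlying simple graph. -/
def carriesCycle {n : ℕ} (f : Fin n → Finset (Fin n)) (C : Finset (Fin n)) : Prop :=
  (∃ u v : Fin n, u ≠ v ∧ C = {u, v} ∧ v ∈ f u ∧ u ∈ f v) ∨
  (3 ≤ C.card ∧ ∃ (v : Fin n) (w : (underlying f).Walk v v),
      w.IsCycle ∧ w.support.toFinset = C)


variable {n k : ℕ} {α : Type*}


/-- counting wrapper for sets of choice functions (fixed classical instances) -/
noncomputable def cntF (n : ℕ) (p : (Fin n → Finset (Fin n)) → Prop) : ℕ :=
  (univ.filter p).card

/-- counting wrapper for sets of finsets -/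
noncomputable def cntS (n : ℕ) (q : Finset (Fin n) → Prop) : ℕ :=
  (univ.filter q).card

lemma cntF_congr {p q : (Fin n → Finset (Fin n)) → Prop} (h : ∀ f, p f ↔ q f) :
    cntF n p = cntF n q := by
  unfold cntF; congr 1; ext f; simp [h f]

lemma cntF_mono {p q : (Fin n → Finset (Fin n)) → Prop} (h : ∀ f, p f → q f) :
    cntF n p ≤ cntF n q := by
  unfold cntF
  apply Finset.card_le_card
  intro f hf
  rcases Finset.mem_filter.mp hf with ⟨h1, h2⟩
  exact Finset.mem_filter.mpr ⟨h1, h f h2⟩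

lemma cntF_le_sum {β : Type*} (p : (Fin n → Finset (Fin n)) → Prop)
    (I : Finset β) (Q : β → (Fin n → Finset (Fin n)) → Prop)
    (h : ∀ f, p f → ∃ i ∈ I, Q i f) :
    cntF n p ≤ ∑ i ∈ I, cntF n (Q i) := by
  unfold cntF
  calc (univ.filter p).card ≤ (I.biUnion fun i => univ.filter (Q i)).card := by
        apply Finset.card_le_card
        intro a ha
        rcases Finset.mem_filter.mp ha with ⟨has, hpa⟩
        rcases h a hpa with ⟨i, hi, hQ⟩
        exact Finset.mem_biUnion.mpr ⟨i, hi, Finset.mem_filter.mpr ⟨has, hQ⟩⟩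
    _ ≤ _ := Finset.card_biUnion_le

lemma coord_card_le (i : Fin n) (S : Finset (Fin n)) (hiS : i ∉ S) :
    cntS n (fun s => s.card = k ∧ i ∉ s ∧ S ⊆ s) ≤
      (n - 1 - S.card).choose (k - S.card) := by
  have hkey : ((univ.erase i) \ S).card = n - 1 - S.card := by
    rw [Finset.card_sdiff_of_subset (by
      intro x hx
      exact Finset.mem_erase.mpr ⟨fun h => hiS (h ▸ hx), Finset.mem_univ x⟩)]
    rw [Finset.card_erase_of_mem (Finset.mem_univ i), Finset.card_univ, Fintype.card_fin]
  unfold cntS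
  rw [← hkey, ← Finset.card_powersetCard]
  apply Finset.card_le_card_of_injOn (fun s => s \ S)
  · intro s hs
    simp only [Finset.mem_coe, Finset.mem_filter, Finset.mem_univ, true_and] at hs
    rcases hs with ⟨hcard, his, hSs⟩
    rw [Finset.mem_coe, Finset.mem_powersetCard]
    constructor
    · intro x hx
      rcases Finset.mem_sdiff.mp hx with ⟨hxs, hxS⟩
      exact Finset.mem_sdiff.mpr ⟨Finset.mem_erase.mpr
        ⟨fun h => his (h ▸ hxs), Finset.mem_univ x⟩, hxS⟩
    · rw [Finset.card_sdiff_of_subset hSs, hcard]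
  · intro s hs t ht hst
    simp only [Finset.mem_coe, Finset.mem_filter, Finset.mem_univ, true_and] at hs ht
    rcases hs with ⟨-, -, hSs⟩
    rcases ht with ⟨-, -, hSt⟩
    have hst' : s \ S = t \ S := hst
    rw [← Finset.sdiff_union_of_subset hSs, ← Finset.sdiff_union_of_subset hSt, hst']

lemma choose_num {m : ℕ} (hk : k ≤ m) : ∀ d, d ≤ k →
    (m - d).choose (k - d) * m ^ d ≤ m.choose k * k ^ d := by
  intro d
  induction d with
  | zero => simp
  | succ d ih =>
    intro hd1
    have hd : d ≤ k := Nat.le_of_succ_le hd1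
    have hstep : (m - (d+1)).choose (k - (d+1)) * m ≤ (m - d).choose (k - d) * k := by
      have hdm : d + 1 ≤ m := le_trans hd1 hk
      have ha : m - d = (m - (d+1)) + 1 := by omega
      have hb : k - d = (k - (d+1)) + 1 := by omega
      have hbm : (k - d) * m ≤ (m - d) * k := by
        zify [hd, (show d ≤ m by omega)]
        nlinarith [hk, (show (0:ℤ) ≤ d by positivity)]
      set a := m - (d+1)
      set b := k - (d+1)
      rw [ha, hb] at hbm ⊢
      have key : (a + 1) * ((a.choose b) * m) ≤ (a + 1) * (((a+1).choose (b+1)) * k) := by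
        have h1 : (a + 1) * (a.choose b) = (a+1).choose (b+1) * (b+1) :=
          Nat.add_one_mul_choose_eq a b
        calc (a + 1) * ((a.choose b) * m) = ((a+1).choose (b+1) * (b+1)) * m := by
              rw [← mul_assoc, h1]
          _ = (a+1).choose (b+1) * ((b+1) * m) := by ring
          _ ≤ (a+1).choose (b+1) * ((a+1) * k) := Nat.mul_le_mul_left _ hbm
          _ = (a + 1) * (((a+1).choose (b+1)) * k) := by ring
      exact Nat.le_of_mul_le_mul_left key (Nat.succ_pos a)
    calc (m - (d+1)).choose (k - (d+1)) * m ^ (d+1)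
        = ((m - (d+1)).choose (k - (d+1)) * m) * m ^ d := by ring
      _ ≤ ((m - d).choose (k - d) * k) * m ^ d := Nat.mul_le_mul_right _ hstep
      _ = ((m - d).choose (k - d) * m ^ d) * k := by ring
      _ ≤ (m.choose k * k ^ d) * k := Nat.mul_le_mul_right _ (ih hd)
      _ = m.choose k * k ^ (d+1) := by ring

lemma coord_main (hk : k ≤ n - 1) (i : Fin n) (S : Finset (Fin n)) (hiS : i ∉ S) :
    cntS n (fun s => s.card = k ∧ i ∉ s ∧ S ⊆ s) * (n - 1) ^ S.card ≤
      (n - 1).choose k * k ^ S.card := by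
  by_cases hd : S.card ≤ k
  · exact le_trans (Nat.mul_le_mul_right _ (coord_card_le i S hiS)) (choose_num hk _ hd)
  · have : cntS n (fun s => s.card = k ∧ i ∉ s ∧ S ⊆ s) = 0 := by
      unfold cntS
      rw [Finset.card_eq_zero, Finset.eq_empty_iff_forall_notMem]
      intro s hs
      simp only [Finset.mem_filter, Finset.mem_univ, true_and] at hs
      rcases hs with ⟨hcard, -, hSs⟩
      exact hd (hcard ▸ Finset.card_le_card hSs)
    rw [this]
    simp

lemma pi_filter_card (Q : Fin n → Finset (Fin n) → Prop) :
    cntF n (fun f => ∀ i, Q i (f i)) = ∏ i, cntS n (Q i) := by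
  unfold cntF cntS
  rw [← Fintype.card_piFinset]
  congr 1
  ext f
  simp [Fintype.mem_piFinset]

lemma coord_card_zero (i : Fin n) :
    cntS n (fun s => s.card = k ∧ i ∉ s) = (n-1).choose k := by
  have h2 : (univ.erase i).card = n - 1 := by
    rw [Finset.card_erase_of_mem (Finset.mem_univ i), Finset.card_univ, Fintype.card_fin]
  unfold cntS
  rw [← h2, ← Finset.card_powersetCard]
  congr 1
  ext s
  simp only [Finset.mem_filter, Finset.mem_univ, true_and, Finset.mem_powersetCard,
    Finset.subset_erase, Finset.subset_univ, true_and]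
  tauto

lemma valid_count : cntF n (validChoices n k) = ((n-1).choose k)^n := by
  have h1 : cntF n (validChoices n k) = cntF n (fun f => ∀ i, (f i).card = k ∧ i ∉ f i) :=
    cntF_congr fun f => Iff.rfl
  rw [h1, pi_filter_card fun i s => s.card = k ∧ i ∉ s]
  simp [coord_card_zero]

lemma count_arcs (hk : k ≤ n - 1) (D : Finset (Fin n × Fin n)) (hD : ∀ p ∈ D, p.1 ≠ p.2) :
    cntF n (fun f => validChoices n k f ∧ ∀ p ∈ D, p.2 ∈ f p.1) * (n - 1) ^ D.card ≤
      cntF n (validChoices n k) * k ^ D.card := by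
  set S : Fin n → Finset (Fin n) := fun i => (D.filter fun p => p.1 = i).image Prod.snd with hS
  have hcard : ∀ i, (S i).card = (D.filter fun p => p.1 = i).card := by
    intro i
    apply Finset.card_image_of_injOn
    intro p hp q hq hpq
    have hp1 := (Finset.mem_filter.mp hp).2
    have hq1 := (Finset.mem_filter.mp hq).2
    exact Prod.ext (hp1.trans hq1.symm) hpq
  have hsum : ∑ i, (S i).card = D.card := by
    rw [Finset.card_eq_sum_card_fiberwise (f := Prod.fst) (t := univ)
      (fun x _ => Finset.mem_univ _)]
    exact Finset.sum_congr rfl fun i _ => (hcard i)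
  have hiS : ∀ i, i ∉ S i := by
    intro i hi
    rcases Finset.mem_image.mp hi with ⟨p, hp, hp2⟩
    rcases Finset.mem_filter.mp hp with ⟨hpD, hp1⟩
    exact hD p hpD (hp1.trans hp2.symm)
  have hevent : cntF n (fun f => validChoices n k f ∧ ∀ p ∈ D, p.2 ∈ f p.1)
      = cntF n (fun f => ∀ i, (f i).card = k ∧ i ∉ f i ∧ S i ⊆ f i) := by
    apply cntF_congr
    intro f
    constructor
    · rintro ⟨hv, harcs⟩ i
      refine ⟨(hv i).1, (hv i).2, ?_⟩
      intro x hx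
      rcases Finset.mem_image.mp hx with ⟨p, hp, hp2⟩
      rcases Finset.mem_filter.mp hp with ⟨hpD, hp1⟩
      exact hp1 ▸ hp2 ▸ harcs p hpD
    · intro h
      refine ⟨fun i => ⟨(h i).1, (h i).2.1⟩, fun p hp => ?_⟩
      exact (h p.1).2.2 (Finset.mem_image.mpr ⟨p, Finset.mem_filter.mpr ⟨hp, rfl⟩, rfl⟩)
  rw [hevent, pi_filter_card fun i s => s.card = k ∧ i ∉ s ∧ S i ⊆ s, valid_count]
  calc (∏ i, cntS n (fun s => s.card = k ∧ i ∉ s ∧ S i ⊆ s)) * (n-1) ^ D.card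
      = ∏ i, (cntS n (fun s => s.card = k ∧ i ∉ s ∧ S i ⊆ s) * (n-1) ^ (S i).card) := by
        rw [Finset.prod_mul_distrib, Finset.prod_pow_eq_pow_sum, hsum]
    _ ≤ ∏ i, ((n-1).choose k * k ^ (S i).card) := by
        apply Finset.prod_le_prod'
        intro i _
        exact coord_main hk i (S i) (hiS i)
    _ = ((n-1).choose k)^n * k ^ D.card := by
        rw [Finset.prod_mul_distrib, Finset.prod_pow_eq_pow_sum, hsum, Finset.prod_const,
          Finset.card_univ, Fintype.card_fin]



def pairsL (l : List α) : List (α × α) := l.zip (l.rotate 1)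

lemma pairsL_length (l : List α) : (pairsL l).length = l.length := by
  simp [pairsL]

lemma pairsL_mem {l : List α} {p : α × α} (hp : p ∈ pairsL l) :
    ∃ j, ∃ h1 : j < l.length, ∃ h2 : (j+1) % l.length < l.length,
      p = (l[j], l[(j+1) % l.length]) := by
  rcases List.mem_iff_getElem.mp hp with ⟨j, hj, hget⟩
  have h1 : j < l.length := by
    have := pairsL_length l; omega
  have h2 : (j+1) % l.length < l.length := Nat.mod_lt _ (by omega)
  refine ⟨j, h1, h2, ?_⟩
  rw [← hget]
  simp [pairsL, List.getElem_zip, List.getElem_rotate]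

lemma pairsL_nodup {l : List α} (h : l.Nodup) : (pairsL l).Nodup := by
  have hmap : (pairsL l).map Prod.fst = l :=
    List.map_fst_zip (by simp)
  rw [← hmap] at h
  exact List.Nodup.of_map Prod.fst h

lemma pairsL_ne {l : List α} (h : l.Nodup) (h2 : 2 ≤ l.length) :
    ∀ p ∈ pairsL l, p.1 ≠ p.2 := by
  intro p hp
  rcases pairsL_mem hp with ⟨j, h1, hmod, rfl⟩
  intro heq
  have hinj := (List.Nodup.getElem_inj_iff h).mp heq
  rcases Nat.lt_or_ge (j+1) l.length with hlt | hge
  · rw [Nat.mod_eq_of_lt hlt] at hinj; omega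
  · have hj1 : j + 1 = l.length := by omega
    rw [hj1, Nat.mod_self] at hinj; omega

lemma pairsL_noswap {l : List α} (h : l.Nodup) (h3 : 3 ≤ l.length) :
    ∀ p ∈ pairsL l, p.swap ∉ pairsL l := by
  rintro p hp hps
  rcases pairsL_mem hp with ⟨j, h1, hmod, rfl⟩
  rcases pairsL_mem hps with ⟨j', h1', hmod', heq⟩
  have e1 : l[(j+1) % l.length] = l[j'] := congrArg Prod.fst heq
  have e2 : l[j] = l[(j'+1) % l.length] := congrArg Prod.snd heq
  have k1 : (j+1) % l.length = j' := (List.Nodup.getElem_inj_iff h).mp e1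
  have k2 : j = (j'+1) % l.length := (List.Nodup.getElem_inj_iff h).mp e2
  rcases Nat.lt_or_ge (j+1) l.length with hlt | hge
  · rw [Nat.mod_eq_of_lt hlt] at k1
    rcases Nat.lt_or_ge (j'+1) l.length with hlt' | hge'
    · rw [Nat.mod_eq_of_lt hlt'] at k2; omega
    · have hh : j' + 1 = l.length := by omega
      rw [hh, Nat.mod_self] at k2; omega
  · have hj1 : j + 1 = l.length := by omega
    rw [hj1, Nat.mod_self] at k1
    subst k1
    have hh : (0+1) % l.length = 1 := Nat.mod_eq_of_lt (by omega)
    rw [hh] at k2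
    omega

/-- extraction of a cyclically ordered list from a cycle -/
lemma exists_cycle_list {f : Fin n → Finset (Fin n)} {C : Finset (Fin n)}
    (h3 : 3 ≤ C.card) {v : Fin n} {w : (underlying f).Walk v v}
    (hw : w.IsCycle) (hsup : w.support.toFinset = C) :
    ∃ l : List (Fin n), l.Nodup ∧ l.toFinset = C ∧ 3 ≤ l.length ∧
      ∀ p ∈ pairsL l, (underlying f).Adj p.1 p.2 := by
  have hchain : List.Chain' (underlying f).Adj w.support := w.isChain_adj_support
  have hcons : w.support = v :: w.support.tail := w.support_eq_cons
  have hnodup : w.support.tail.Nodup := hw.support_nodup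
  set s := w.support with hs
  set l := w.support.tail with hl
  have hlast : s.getLast (by rw [hcons]; simp) = v := w.getLast_support
  have hlne : l ≠ [] := by
    intro h
    have hsv1 : s = [v] := by rw [hcons, h]
    rw [hsv1] at hsup
    simp at hsup
    rw [← hsup] at h3
    simp at h3
  have hslen : s.length = l.length + 1 := by rw [hcons]; simp
  have hgetl : ∀ (i : ℕ) (hi : i < l.length), l[i] = s[i+1]'(by omega) := by
    intro i hi
    simp only [hcons, List.getElem_cons_succ]
  have hsv : s[l.length]'(by omega) = v := by
    have h2 := List.getLast_eq_getElem (l := s) (by rw [hcons]; simp)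
    rw [hlast] at h2
    simp only [hslen, Nat.add_sub_cancel] at h2
    exact h2.symm
  have hlpos : 0 < l.length := List.length_pos_iff.mpr hlne
  have hvl : v ∈ l := by
    have hmem : l[l.length - 1]'(by omega) ∈ l := List.getElem_mem _
    have heq := hgetl (l.length - 1) (by omega)
    simp only [show l.length - 1 + 1 = l.length from by omega] at heq
    rw [hsv] at heq
    rwa [heq] at hmem
  have htf : l.toFinset = C := by
    rw [← hsup, hcons]
    simp only [List.toFinset_cons]
    rw [Finset.insert_eq_self.mpr (List.mem_toFinset.mpr hvl)]
  have hlen : 3 ≤ l.length := by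
    have := List.toFinset_card_of_nodup hnodup
    rw [htf] at this
    omega
  refine ⟨l, hnodup, htf, hlen, ?_⟩
  intro p hp
  rcases pairsL_mem hp with ⟨j, h1, hmod, rfl⟩
  have hchain' := List.isChain_iff_getElem.mp hchain
  rcases Nat.lt_or_ge (j+1) l.length with hlt | hge
  · simp only [Nat.mod_eq_of_lt hlt]
    have hadj := hchain' (j+1) (by omega)
    show (underlying f).Adj l[j] (l[j+1]'hlt)
    rw [hgetl j h1, hgetl (j+1) hlt]
    exact hadj
  · have hj1 : j + 1 = l.length := by omega
    simp only [hj1, Nat.mod_self]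
    show (underlying f).Adj l[j] (l[0]'(by omega))
    have e1 : l[j]'h1 = v := by
      have heq := hgetl j h1
      simp only [hj1] at heq
      rw [hsv] at heq
      exact heq
    have hadj := hchain' 0 (by omega)
    simp only [hcons, List.getElem_cons_zero, List.getElem_cons_succ] at hadj
    rw [e1]
    exact hadj



def orientSet (P S : Finset (Fin n × Fin n)) : Finset (Fin n × Fin n) :=
  P.image fun p => if p ∈ S then p else p.swap

lemma orientSet_card {P S : Finset (Fin n × Fin n)}
    (h2 : ∀ p ∈ P, p.swap ∉ P) :
    (orientSet P S).card = P.card := by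
  apply Finset.card_image_of_injOn
  intro p hp q hq hpq
  by_cases hpS : p ∈ S <;> by_cases hqS : q ∈ S <;> simp only [hpS, hqS, if_pos, if_neg,
    if_true, if_false] at hpq
  · exact hpq
  · exact absurd (hpq ▸ hp) (h2 q hq)
  · exact absurd (hpq ▸ hq) (h2 p hp)
  · exact Prod.swap_injective hpq

lemma orientSet_strict {P S : Finset (Fin n × Fin n)} (h1 : ∀ p ∈ P, p.1 ≠ p.2) :
    ∀ p ∈ orientSet P S, p.1 ≠ p.2 := by
  intro p hp
  rcases Finset.mem_image.mp hp with ⟨q, hq, rfl⟩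
  by_cases hqS : q ∈ S <;> simp only [hqS, if_true, if_false, if_pos, if_neg]
  · exact h1 q hq
  · exact fun h => (h1 q hq) h.symm

lemma orientSet_cover {f : Fin n → Finset (Fin n)} {P : Finset (Fin n × Fin n)}
    (h : ∀ p ∈ P, p.2 ∈ f p.1 ∨ p.1 ∈ f p.2) :
    ∃ S ∈ P.powerset, ∀ p ∈ orientSet P S, p.2 ∈ f p.1 := by
  refine ⟨P.filter (fun p => p.2 ∈ f p.1), Finset.mem_powerset.mpr (Finset.filter_subset _ _), ?_⟩
  intro p hp
  rcases Finset.mem_image.mp hp with ⟨q, hq, rfl⟩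
  by_cases hqS : q ∈ P.filter (fun p => p.2 ∈ f p.1)
  · simp only [hqS, if_true, if_pos]
    exact (Finset.mem_filter.mp hqS).2
  · simp only [hqS, if_false, if_neg, not_false_iff]
    have : ¬ (q.2 ∈ f q.1) := fun hc => hqS (Finset.mem_filter.mpr ⟨hq, hc⟩)
    rcases h q hq with hc | hc
    · exact absurd hc this
    · exact hc

lemma perm_toList {l : List (Fin n)} {C : Finset (Fin n)} (hn : l.Nodup)
    (ht : l.toFinset = C) : List.Perm l C.toList := by
  have h1 : (l : Multiset (Fin n)) = C.val := by
    rw [← ht, ← List.toFinset_coe, Multiset.toFinset_val,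
      Multiset.dedup_eq_self.mpr (Multiset.coe_nodup.mpr hn)]
  have h2 : (C.toList : Multiset (Fin n)) = C.val := Multiset.coe_toList _
  exact Multiset.coe_eq_coe.mp (h1.trans h2.symm)

lemma carries_card {f : Fin n → Finset (Fin n)} {C : Finset (Fin n)}
    (h : carriesCycle f C) : 2 ≤ C.card := by
  rcases h with ⟨u, v, hne, rfl, -, -⟩ | ⟨h3, -⟩
  · rw [Finset.card_insert_of_notMem (by simp [hne]), Finset.card_singleton]
  · omega

lemma two_cycle_arcs {f : Fin n → Finset (Fin n)} {C : Finset (Fin n)}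
    (hC : C.card = 2) (h : carriesCycle f C) :
    ∀ p ∈ (C ×ˢ C).filter (fun p => p.1 ≠ p.2), p.2 ∈ f p.1 := by
  rcases h with ⟨u, v, hne, hCe, h1, h2⟩ | ⟨h3, -⟩
  · intro p hp
    obtain ⟨p1, p2⟩ := p
    simp only [Finset.mem_filter, Finset.mem_product, hCe, Finset.mem_insert,
      Finset.mem_singleton] at hp
    obtain ⟨⟨hp1, hp2⟩, hne'⟩ := hp
    rcases hp1 with rfl | rfl <;> rcases hp2 with rfl | rfl
    · exact absurd rfl hne'
    · exact h1
    · exact h2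
    · exact absurd rfl hne' 
  · omega

lemma two_cycle_arcs_card {C : Finset (Fin n)} {u v : Fin n} (hne : u ≠ v)
    (hC : C = {u, v}) :
    ((C ×ˢ C).filter (fun p => p.1 ≠ p.2)).card = 2 := by
  subst hC
  have : (({u, v} ×ˢ {u, v} : Finset (Fin n × Fin n)).filter (fun p => p.1 ≠ p.2))
      = {(u, v), (v, u)} := by
    ext ⟨p1, p2⟩
    simp only [Finset.mem_filter, Finset.mem_product, Finset.mem_insert, Finset.mem_singleton,
      Prod.mk.injEq]
    constructor
    · rintro ⟨⟨h1, h2⟩, hne'⟩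
      rcases h1 with rfl | rfl <;> rcases h2 with rfl | rfl <;> tauto
    · rintro (⟨rfl, rfl⟩ | ⟨rfl, rfl⟩)
      · exact ⟨⟨Or.inl rfl, Or.inr rfl⟩, hne⟩
      · exact ⟨⟨Or.inr rfl, Or.inl rfl⟩, fun h => hne h.symm⟩
  rw [this]
  rw [Finset.card_insert_of_notMem (by simp [Prod.ext_iff, hne]),
    Finset.card_singleton]


lemma per_C (hk : k ≤ n - 1) (C : Finset (Fin n)) :
    cntF n (fun f => validChoices n k f ∧ carriesCycle f C) * (n-1)^C.card ≤
      Nat.factorial C.card * (2^C.card * (cntF n (validChoices n k) * k^C.card)) := by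
  rcases Nat.lt_or_ge C.card 3 with h3 | h3
  · rcases Nat.lt_or_ge C.card 2 with h2 | h2
    · have hz : cntF n (fun f => validChoices n k f ∧ carriesCycle f C) = 0 := by
        unfold cntF
        rw [Finset.card_eq_zero, Finset.eq_empty_iff_forall_notMem]
        intro f hf
        simp only [Finset.mem_filter] at hf
        exact absurd (carries_card hf.2.2) (by omega)
      rw [hz]
      simp
    · have h2' : C.card = 2 := by omega
      set D := (C ×ˢ C).filter (fun p => p.1 ≠ p.2) with hD
      have hstrict : ∀ p ∈ D, p.1 ≠ p.2 := fun p hp => (Finset.mem_filter.mp hp).2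
      have hmono : cntF n (fun f => validChoices n k f ∧ carriesCycle f C) ≤
          cntF n (fun f => validChoices n k f ∧ ∀ p ∈ D, p.2 ∈ f p.1) :=
        cntF_mono fun f hf => ⟨hf.1, two_cycle_arcs h2' hf.2⟩
      obtain ⟨u, v, hne, hCe⟩ := Finset.card_eq_two.mp h2'
      have hDcard : D.card = 2 := two_cycle_arcs_card hne hCe
      calc cntF n (fun f => validChoices n k f ∧ carriesCycle f C) * (n-1)^C.card
          ≤ cntF n (fun f => validChoices n k f ∧ ∀ p ∈ D, p.2 ∈ f p.1) * (n-1)^D.card := by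
            rw [hDcard, h2']
            exact Nat.mul_le_mul_right _ hmono
        _ ≤ cntF n (validChoices n k) * k^D.card := count_arcs hk D hstrict
        _ = cntF n (validChoices n k) * k^C.card := by rw [hDcard, h2']
        _ ≤ Nat.factorial C.card * (2^C.card * (cntF n (validChoices n k) * k^C.card)) := by
            have h1 : 1 ≤ Nat.factorial C.card * 2^C.card := Nat.one_le_iff_ne_zero.mpr (by positivity)
            calc cntF n (validChoices n k) * k^C.card
                = 1 * (cntF n (validChoices n k) * k^C.card) := (one_mul _).symm
              _ ≤ (Nat.factorial C.card * 2^C.card) * (cntF n (validChoices n k) * k^C.card) :=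
                  Nat.mul_le_mul_right _ h1
              _ = Nat.factorial C.card * (2^C.card * (cntF n (validChoices n k) * k^C.card)) := by ring
  · set I := C.toList.permutations.toFinset with hI
    have hIcard : I.card ≤ Nat.factorial C.card := by
      calc I.card ≤ C.toList.permutations.length := List.toFinset_card_le _
        _ = Nat.factorial C.toList.length := List.length_permutations _
        _ = Nat.factorial C.card := by rw [Finset.length_toList]
    have hlfacts : ∀ l ∈ I, l.Nodup ∧ l.length = C.card := by
      intro l hl
      have hperm : List.Perm l C.toList := List.mem_permutations.mp (List.mem_toFinset.mp hl)
      constructor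
      · exact hperm.nodup_iff.mpr (Finset.nodup_toList C)
      · rw [hperm.length_eq, Finset.length_toList]
    have step1 : cntF n (fun f => validChoices n k f ∧ carriesCycle f C) ≤
        ∑ l ∈ I, cntF n (fun f => validChoices n k f ∧
          ∀ p ∈ pairsL l, (p.2 ∈ f p.1 ∨ p.1 ∈ f p.2)) := by
      apply cntF_le_sum
      rintro f ⟨hv, hc⟩
      rcases hc with ⟨u, v, hne, hCe, -⟩ | ⟨-, v, w, hw, hsup⟩
      · exfalso
        have : C.card ≤ 2 := by
          rw [hCe]
          exact (Finset.card_insert_le _ _).trans (by simp)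
        omega
      · obtain ⟨l, hnd, htf, hlen, hadj⟩ := exists_cycle_list h3 hw hsup
        refine ⟨l, List.mem_toFinset.mpr (List.mem_permutations.mpr (perm_toList hnd htf)),
          hv, ?_⟩
        intro p hp
        have hA := hadj p hp
        rw [underlying, SimpleGraph.fromRel_adj] at hA
        exact hA.2
    have step2 : ∀ l ∈ I, cntF n (fun f => validChoices n k f ∧
          ∀ p ∈ pairsL l, (p.2 ∈ f p.1 ∨ p.1 ∈ f p.2)) * (n-1)^C.card ≤
        2^C.card * (cntF n (validChoices n k) * k^C.card) := by
      intro l hl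
      obtain ⟨hnd, hlen⟩ := hlfacts l hl
      have h3l : 3 ≤ l.length := by rw [hlen]; exact h3
      have h2l : 2 ≤ l.length := le_trans (by norm_num) h3l
      set P := (pairsL l).toFinset with hP
      have hPcard : P.card = C.card := by
        rw [hP, List.toFinset_card_of_nodup (pairsL_nodup hnd), pairsL_length, hlen]
      have hPne : ∀ p ∈ P, p.1 ≠ p.2 := by
        intro p hp
        exact pairsL_ne hnd h2l p (List.mem_toFinset.mp hp)
      have hPswap : ∀ p ∈ P, p.swap ∉ P := by
        intro p hp hps
        exact pairsL_noswap hnd h3l p (List.mem_toFinset.mp hp)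
          (List.mem_toFinset.mp hps)
      have inner : cntF n (fun f => validChoices n k f ∧
            ∀ p ∈ pairsL l, (p.2 ∈ f p.1 ∨ p.1 ∈ f p.2)) ≤
          ∑ S ∈ P.powerset, cntF n (fun f => validChoices n k f ∧
            ∀ p ∈ orientSet P S, p.2 ∈ f p.1) := by
        apply cntF_le_sum
        rintro f ⟨hv, hor⟩
        obtain ⟨S, hS, hSev⟩ := orientSet_cover (P := P)
          (fun p hp => hor p (List.mem_toFinset.mp hp))
        exact ⟨S, hS, hv, hSev⟩
      calc cntF n (fun f => validChoices n k f ∧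
            ∀ p ∈ pairsL l, (p.2 ∈ f p.1 ∨ p.1 ∈ f p.2)) * (n-1)^C.card
          ≤ (∑ S ∈ P.powerset, cntF n (fun f => validChoices n k f ∧
              ∀ p ∈ orientSet P S, p.2 ∈ f p.1)) * (n-1)^C.card :=
            Nat.mul_le_mul_right _ inner
        _ = ∑ S ∈ P.powerset, (cntF n (fun f => validChoices n k f ∧
              ∀ p ∈ orientSet P S, p.2 ∈ f p.1) * (n-1)^C.card) := Finset.sum_mul _ _ _
        _ ≤ ∑ S ∈ P.powerset, (cntF n (validChoices n k) * k^C.card) := by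
            apply Finset.sum_le_sum
            intro S hS
            have harc := count_arcs hk (orientSet P S) (orientSet_strict hPne)
            rw [orientSet_card hPswap, hPcard] at harc
            exact harc
        _ = 2^C.card * (cntF n (validChoices n k) * k^C.card) := by
            rw [Finset.sum_const, Finset.card_powerset, hPcard, smul_eq_mul]
    calc cntF n (fun f => validChoices n k f ∧ carriesCycle f C) * (n-1)^C.card
        ≤ (∑ l ∈ I, cntF n (fun f => validChoices n k f ∧
            ∀ p ∈ pairsL l, (p.2 ∈ f p.1 ∨ p.1 ∈ f p.2))) * (n-1)^C.card :=
          Nat.mul_le_mul_right _ step1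
      _ = ∑ l ∈ I, (cntF n (fun f => validChoices n k f ∧
            ∀ p ∈ pairsL l, (p.2 ∈ f p.1 ∨ p.1 ∈ f p.2)) * (n-1)^C.card) :=
          Finset.sum_mul _ _ _
      _ ≤ ∑ l ∈ I, (2^C.card * (cntF n (validChoices n k) * k^C.card)) :=
          Finset.sum_le_sum step2
      _ = I.card * (2^C.card * (cntF n (validChoices n k) * k^C.card)) := by
          rw [Finset.sum_const, smul_eq_mul]
      _ ≤ Nat.factorial C.card * (2^C.card * (cntF n (validChoices n k) * k^C.card)) :=
          Nat.mul_le_mul_right _ hIcard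

noncomputable def nshort (T : ℕ) (f : Fin n → Finset (Fin n)) : ℕ :=
  (univ.filter fun C : Finset (Fin n) => C.card < T ∧ carriesCycle f C).card

lemma geom_le {r : ℕ} (hr : 2 ≤ r) (T : ℕ) : ∑ j ∈ Finset.range T, r^j ≤ r^T := by
  induction T with
  | zero => simp
  | succ T ih =>
    rw [Finset.sum_range_succ, pow_succ]
    calc (∑ j ∈ Finset.range T, r^j) + r^T ≤ r^T + r^T := by omega
      _ = r^T * 2 := by ring
      _ ≤ r^T * r := Nat.mul_le_mul_left _ hr

lemma master (hk : k ≤ n - 1) (hk1 : 1 ≤ k) (hn2 : 2 ≤ n) (T : ℕ) :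
    (∑ f ∈ univ.filter (validChoices n k), nshort T f) ≤
      (4*k)^T * cntF n (validChoices n k) := by
  set V := cntF n (validChoices n k) with hV
  have swap : (∑ f ∈ univ.filter (validChoices n k), nshort T f)
      = ∑ C ∈ univ.filter (fun C : Finset (Fin n) => C.card < T),
          cntF n (fun f => validChoices n k f ∧ carriesCycle f C) := by
    have step : ∀ f, nshort (n := n) T f = ∑ C ∈ univ.filter
        (fun C : Finset (Fin n) => C.card < T), (if carriesCycle f C then 1 else 0) := by
      intro f
      unfold nshort
      have he : (univ.filter fun C : Finset (Fin n) => C.card < T ∧ carriesCycle f C)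
          = (univ.filter (fun C : Finset (Fin n) => C.card < T)).filter
              (fun C => carriesCycle f C) := by
        ext C
        simp only [Finset.mem_filter, Finset.mem_univ, true_and]
      rw [he, Finset.card_filter]
    calc (∑ f ∈ univ.filter (validChoices n k), nshort T f)
        = ∑ f ∈ univ.filter (validChoices n k), ∑ C ∈ univ.filter
            (fun C : Finset (Fin n) => C.card < T), (if carriesCycle f C then 1 else 0) :=
          Finset.sum_congr rfl fun f _ => step f
      _ = ∑ C ∈ univ.filter (fun C : Finset (Fin n) => C.card < T),
            ∑ f ∈ univ.filter (validChoices n k), (if carriesCycle f C then 1 else 0) :=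
          Finset.sum_comm
      _ = ∑ C ∈ univ.filter (fun C : Finset (Fin n) => C.card < T),
            cntF n (fun f => validChoices n k f ∧ carriesCycle f C) := by
          apply Finset.sum_congr rfl
          intro C _
          rw [← Finset.card_filter]
          unfold cntF
          congr 1
          ext f
          simp only [Finset.mem_filter, Finset.mem_univ, true_and]
  rw [swap]
  have hpos : 0 < (n-1)^T := pow_pos (by omega) T
  apply Nat.le_of_mul_le_mul_right _ hpos
  calc (∑ C ∈ univ.filter (fun C : Finset (Fin n) => C.card < T),
          cntF n (fun f => validChoices n k f ∧ carriesCycle f C)) * (n-1)^T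
      = ∑ C ∈ univ.filter (fun C : Finset (Fin n) => C.card < T),
          (cntF n (fun f => validChoices n k f ∧ carriesCycle f C) * (n-1)^T) :=
        Finset.sum_mul _ _ _
    _ = ∑ j ∈ Finset.range T, ∑ C ∈ (univ.filter
          (fun C : Finset (Fin n) => C.card < T)).filter (fun C => C.card = j),
          (cntF n (fun f => validChoices n k f ∧ carriesCycle f C) * (n-1)^T) :=
        (Finset.sum_fiberwise_of_maps_to (fun C hC => by
          simp only [Finset.mem_filter, Finset.mem_univ, true_and] at hC
          exact Finset.mem_range.mpr hC) _).symm
    _ ≤ ∑ j ∈ Finset.range T, (n.choose j) *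
          (Nat.factorial j * (2^j * (V * k^j)) * (n-1)^(T-j)) := by
        apply Finset.sum_le_sum
        intro j hj
        have hjT : j < T := Finset.mem_range.mp hj
        have hterm : ∀ C ∈ (univ.filter (fun C : Finset (Fin n) => C.card < T)).filter
            (fun C => C.card = j),
            cntF n (fun f => validChoices n k f ∧ carriesCycle f C) * (n-1)^T ≤
              Nat.factorial j * (2^j * (V * k^j)) * (n-1)^(T-j) := by
          intro C hC
          have hCj : C.card = j := by
            simp only [Finset.mem_filter] at hC
            exact hC.2
          have hsplit : (n-1)^T = (n-1)^j * (n-1)^(T-j) := by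
            rw [← pow_add]
            congr 1
            omega
          calc cntF n (fun f => validChoices n k f ∧ carriesCycle f C) * (n-1)^T
              = (cntF n (fun f => validChoices n k f ∧ carriesCycle f C) * (n-1)^C.card)
                  * (n-1)^(T-j) := by rw [hsplit, hCj, ← mul_assoc]
            _ ≤ (Nat.factorial C.card * (2^C.card * (V * k^C.card))) * (n-1)^(T-j) :=
                Nat.mul_le_mul_right _ (per_C hk C)
            _ = Nat.factorial j * (2^j * (V * k^j)) * (n-1)^(T-j) := by rw [hCj]
        have hfib : ((univ.filter (fun C : Finset (Fin n) => C.card < T)).filter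
            (fun C => C.card = j)).card ≤ n.choose j := by
          calc ((univ.filter (fun C : Finset (Fin n) => C.card < T)).filter
              (fun C => C.card = j)).card
              ≤ (univ.filter (fun C : Finset (Fin n) => C.card = j)).card := by
                apply Finset.card_le_card
                intro C hC
                simp only [Finset.mem_filter, Finset.mem_univ, true_and] at hC ⊢
                exact hC.2
            _ = n.choose j := by
                have : (univ.filter (fun C : Finset (Fin n) => C.card = j))
                    = Finset.powersetCard j univ := by
                  ext C
                  simp [Finset.mem_powersetCard]
                rw [this, Finset.card_powersetCard, Finset.card_univ, Fintype.card_fin]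
        calc (∑ C ∈ (univ.filter (fun C : Finset (Fin n) => C.card < T)).filter
              (fun C => C.card = j),
              (cntF n (fun f => validChoices n k f ∧ carriesCycle f C) * (n-1)^T))
            ≤ ((univ.filter (fun C : Finset (Fin n) => C.card < T)).filter
              (fun C => C.card = j)).card •
                (Nat.factorial j * (2^j * (V * k^j)) * (n-1)^(T-j)) :=
              Finset.sum_le_card_nsmul _ _ _ hterm
          _ ≤ (n.choose j) * (Nat.factorial j * (2^j * (V * k^j)) * (n-1)^(T-j)) := by
              rw [smul_eq_mul]
              exact Nat.mul_le_mul_right _ hfib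
    _ ≤ ∑ j ∈ Finset.range T, ((4*k)^j * ((n-1)^T * V)) := by
        apply Finset.sum_le_sum
        intro j hj
        have hjT : j < T := Finset.mem_range.mp hj
        have h1 : n.choose j * Nat.factorial j ≤ n^j := by
          rw [mul_comm, ← Nat.descFactorial_eq_factorial_mul_choose]
          exact Nat.descFactorial_le_pow n j
        have h2 : n^j ≤ (2*(n-1))^j := Nat.pow_le_pow_left (by omega) j
        calc n.choose j * (Nat.factorial j * (2^j * (V * k^j)) * (n-1)^(T-j))
            = (n.choose j * Nat.factorial j) * (2^j * k^j * (n-1)^(T-j) * V) := by ring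
          _ ≤ n^j * (2^j * k^j * (n-1)^(T-j) * V) := Nat.mul_le_mul_right _ h1
          _ ≤ (2*(n-1))^j * (2^j * k^j * (n-1)^(T-j) * V) := Nat.mul_le_mul_right _ h2
          _ = (4*k)^j * ((n-1)^j * (n-1)^(T-j)) * V := by
              rw [show (4*k:ℕ) = 2*(2*k) from by ring, mul_pow, mul_pow]
              ring
          _ = (4*k)^j * ((n-1)^T * V) := by
              rw [← pow_add, show j + (T-j) = T from by omega]
              ring
    _ = (∑ j ∈ Finset.range T, (4*k)^j) * ((n-1)^T * V) := (Finset.sum_mul _ _ _).symm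
    _ ≤ (4*k)^T * ((n-1)^T * V) := Nat.mul_le_mul_right _ (geom_le (by omega) T)
    _ = (4*k)^T * V * (n-1)^T := by ring

lemma valid_pos (hkn : k ≤ n - 1) (hn1 : 1 ≤ n) : 0 < cntF n (validChoices n k) := by
  unfold cntF
  rw [Finset.card_pos]
  have hex : ∀ i : Fin n, ∃ s : Finset (Fin n), s ⊆ univ.erase i ∧ s.card = k := by
    intro i
    have h := (Finset.le_card_iff_exists_subset_card (n := k)).mp (by
      rw [Finset.card_erase_of_mem (Finset.mem_univ i), Finset.card_univ, Fintype.card_fin]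
      exact hkn)
    obtain ⟨t, ht1, ht2⟩ := h
    exact ⟨t, ht1, ht2⟩
  refine ⟨fun i => Classical.choose (hex i), ?_⟩
  simp only [Finset.mem_filter, Finset.mem_univ, true_and]
  intro i
  obtain ⟨hsub, hcard⟩ := Classical.choose_spec (hex i)
  exact ⟨hcard, fun hmem => (Finset.mem_erase.mp (hsub hmem)).1 rfl⟩

-- MORE

/-- Every family of pairwise vertex-disjoint cycles of `G_{k-out}` has at most
`3n·log(2k)/log n` members. -/
def fewDisjointCycles (n k : ℕ) (f : Fin n → Finset (Fin n)) : Prop :=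
  ∀ 𝒞 : Finset (Finset (Fin n)),
    (∀ C ∈ 𝒞, carriesCycle f C) →
    ((𝒞 : Set (Finset (Fin n))).Pairwise fun C C' => Disjoint C C') →
    (𝒞.card : ℝ) ≤ 3 * n * Real.log (2 * k) / Real.log n

/-- The probability of `fewDisjointCycles` under the uniform random choices. -/
noncomputable def prFewDisjointCycles (n k : ℕ) : ℝ :=
  ((Finset.univ.filter (fun f : Fin n → Finset (Fin n) =>
      validChoices n k f ∧ fewDisjointCycles n k f)).card : ℝ) /
  ((Finset.univ.filter (fun f : Fin n → Finset (Fin n) => validChoices n k f)).card : ℝ)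

lemma determ (T : ℕ) (f : Fin n → Finset (Fin n)) (hbad : ¬ fewDisjointCycles n k f)
    (hTlog : Real.log n / (2 * Real.log (2*(k:ℝ))) ≤ (T:ℝ))
    (hlogn : 0 < Real.log n) (hlogk : 0 < Real.log (2*(k:ℝ))) :
    (n : ℝ) * Real.log (2*(k:ℝ)) / Real.log n ≤ (nshort T f : ℝ) := by
  unfold fewDisjointCycles at hbad
  push_neg at hbad
  obtain ⟨𝒞, hcyc, hdisj, hcard⟩ := hbad
  set L := 𝒞.filter (fun C => ¬ (C.card < T)) with hLdef
  set Sh := 𝒞.filter (fun C => C.card < T) with hShdef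
  have hsplit : Sh.card + L.card = 𝒞.card :=
    Finset.card_filter_add_card_filter_not (p := fun C : Finset (Fin n) => C.card < T)
  have hLn : L.card * T ≤ n := by
    calc L.card * T = ∑ _C ∈ L, T := by rw [Finset.sum_const, smul_eq_mul, mul_comm]
      _ ≤ ∑ C ∈ L, C.card := Finset.sum_le_sum (fun C hC => by
          have := (Finset.mem_filter.mp hC).2
          omega)
      _ = (L.biUnion fun C => C).card := (Finset.card_biUnion (fun x hx y hy hxy =>
          hdisj (Finset.mem_coe.mpr ((Finset.filter_subset _ _) hx))
            (Finset.mem_coe.mpr ((Finset.filter_subset _ _) hy)) hxy)).symm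
      _ ≤ (univ : Finset (Fin n)).card := Finset.card_le_card (Finset.subset_univ _)
      _ = n := by rw [Finset.card_univ, Fintype.card_fin]
  have hShle : Sh.card ≤ nshort T f := by
    unfold nshort
    apply Finset.card_le_card
    intro C hC
    rcases Finset.mem_filter.mp hC with ⟨hC𝒞, hCT⟩
    exact Finset.mem_filter.mpr ⟨Finset.mem_univ _, hCT, hcyc C hC𝒞⟩
  have hx : (0:ℝ) < Real.log n / (2 * Real.log (2*(k:ℝ))) :=
    div_pos hlogn (mul_pos two_pos hlogk)
  have hT0 : (0:ℝ) < T := hx.trans_le hTlog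
  have h2 : (L.card:ℝ) ≤ (n:ℝ) / T := by
    rw [le_div_iff₀ hT0]
    exact_mod_cast hLn
  have h3 : (n:ℝ) / T ≤ (n:ℝ) / (Real.log n / (2*Real.log (2*(k:ℝ)))) :=
    div_le_div_of_nonneg_left (by positivity) hx hTlog
  have h4 : (n:ℝ) / (Real.log n / (2*Real.log (2*(k:ℝ))))
      = 2*(n:ℝ)*Real.log (2*(k:ℝ))/Real.log n := by
    field_simp
  have h5 : (L.card:ℝ) ≤ 2*(n:ℝ)*Real.log (2*(k:ℝ))/Real.log n :=
    h2.trans (h3.trans_eq h4)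
  have hSh' : (𝒞.card:ℝ) - (L.card:ℝ) ≤ (Sh.card : ℝ) := by
    have : (Sh.card:ℝ) + (L.card:ℝ) = (𝒞.card:ℝ) := by exact_mod_cast hsplit
    linarith
  calc (n:ℝ) * Real.log (2*(k:ℝ))/Real.log n
      = 3*(n:ℝ)*Real.log (2*(k:ℝ))/Real.log n
        - 2*(n:ℝ)*Real.log (2*(k:ℝ))/Real.log n := by ring
    _ ≤ (𝒞.card:ℝ) - (L.card:ℝ) := by
        have := hcard
        linarith
    _ ≤ (Sh.card:ℝ) := hSh'
    _ ≤ (nshort T f : ℝ) := by exact_mod_cast hShle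

lemma bad_bound (hkn : k ≤ n - 1) (hk1 : 1 ≤ k) (hn2 : 2 ≤ n) (T : ℕ)
    (hTlog : Real.log n / (2 * Real.log (2*(k:ℝ))) ≤ (T:ℝ))
    (hlogn : 0 < Real.log n) (hlogk : 0 < Real.log (2*(k:ℝ))) :
    (cntF n (fun f => validChoices n k f ∧ ¬ fewDisjointCycles n k f) : ℝ) *
      ((n:ℝ) * Real.log (2*(k:ℝ)) / Real.log n) ≤
      (((4*k)^T * cntF n (validChoices n k) : ℕ) : ℝ) := by
  set badF := univ.filter (fun f : Fin n → Finset (Fin n) =>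
    validChoices n k f ∧ ¬ fewDisjointCycles n k f) with hbadF
  have hcnt : cntF n (fun f => validChoices n k f ∧ ¬ fewDisjointCycles n k f)
      = badF.card := by
    unfold cntF
    congr 1
    ext f
    simp only [Finset.mem_filter, hbadF]
  have hsub : badF ⊆ univ.filter (validChoices n k) := by
    intro f hf
    simp only [Finset.mem_filter, hbadF] at hf ⊢
    exact ⟨hf.1, hf.2.1⟩
  rw [hcnt]
  calc (badF.card : ℝ) * ((n:ℝ) * Real.log (2*(k:ℝ)) / Real.log n)
      = ∑ _f ∈ badF, ((n:ℝ) * Real.log (2*(k:ℝ)) / Real.log n) := by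
        rw [Finset.sum_const, nsmul_eq_mul]
    _ ≤ ∑ f ∈ badF, (nshort T f : ℝ) := Finset.sum_le_sum (fun f hf => by
        have hf' := Finset.mem_filter.mp hf
        exact determ T f hf'.2.2 hTlog hlogn hlogk)
    _ ≤ ∑ f ∈ univ.filter (validChoices n k), (nshort T f:ℝ) :=
        Finset.sum_le_sum_of_subset_of_nonneg hsub (fun f _ _ => by positivity)
    _ = ((∑ f ∈ univ.filter (validChoices n k), nshort T f : ℕ) : ℝ) := by
        rw [Nat.cast_sum]
    _ ≤ (((4*k)^T * cntF n (validChoices n k) : ℕ) : ℝ) := by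
        exact_mod_cast master hkn hk1 hn2 T


theorem few_disjoint_cycles_whp (k : ℕ) (hk : 2 ≤ k) :
    Filter.Tendsto (fun n => prFewDisjointCycles n k) Filter.atTop (nhds 1) := by
  have hk4 : (4:ℝ) ≤ 2*(k:ℝ) := by
    have : (4:ℕ) ≤ 2*k := by omega
    exact_mod_cast this
  have hlogk : 0 < Real.log (2*(k:ℝ)) := Real.log_pos (by linarith)
  set c : ℝ := 4*(k:ℝ)/Real.log (2*(k:ℝ)) with hc
  set ε : ℕ → ℝ := fun n => c * (Real.log n / (n:ℝ)^((1:ℝ)/4)) with hε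
  have hεlim : Filter.Tendsto ε Filter.atTop (nhds 0) := by
    have h1 : Filter.Tendsto (fun x:ℝ => Real.log x / x^((1:ℝ)/4)) Filter.atTop (nhds 0) :=
      (isLittleO_log_rpow_atTop (by norm_num)).tendsto_div_nhds_zero
    have h2 := h1.comp (tendsto_natCast_atTop_atTop (R := ℝ))
    have h3 := h2.const_mul c
    simpa [hε] using h3
  have hmain : ∀ᶠ n in Filter.atTop,
      1 - ε n ≤ prFewDisjointCycles n k ∧ prFewDisjointCycles n k ≤ 1 := by
    filter_upwards [Filter.eventually_ge_atTop (k+2), Filter.eventually_ge_atTop 3]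
      with n hnk hn3
    have hn2 : 2 ≤ n := by omega
    have hkn : k ≤ n - 1 := by omega
    have hnpos : (0:ℝ) < n := by positivity
    have hn1R : (1:ℝ) < n := by exact_mod_cast (by omega : 1 < n)
    have hlogn : 0 < Real.log n := Real.log_pos hn1R
    set x : ℝ := Real.log n / (2*Real.log (2*(k:ℝ))) with hxdef
    have hx0 : 0 ≤ x := le_of_lt (div_pos hlogn (by positivity))
    set T := ⌈x⌉₊ with hT
    have hTlog : x ≤ (T:ℝ) := Nat.le_ceil _
    have hVpos : 0 < cntF n (validChoices n k) := valid_pos hkn (by omega)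
    set V := cntF n (validChoices n k) with hV
    set B := cntF n (fun f => validChoices n k f ∧ ¬ fewDisjointCycles n k f) with hB
    set G := (Finset.univ.filter (fun f : Fin n → Finset (Fin n) =>
        validChoices n k f ∧ fewDisjointCycles n k f)).card with hG
    have hgood : G + B = V := by
      have h := Finset.card_filter_add_card_filter_not
        (s := Finset.univ.filter (fun f : Fin n → Finset (Fin n) => validChoices n k f))
        (p := fun f => fewDisjointCycles n k f)
      have e1 : ((Finset.univ.filter (fun f : Fin n → Finset (Fin n) =>
          validChoices n k f)).filter (fun f => fewDisjointCycles n k f)).card = G := by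
        rw [hG]
        congr 1
        ext f
        simp only [Finset.mem_filter, Finset.mem_univ, true_and, and_assoc]
      have e2 : ((Finset.univ.filter (fun f : Fin n → Finset (Fin n) =>
          validChoices n k f)).filter (fun f => ¬ fewDisjointCycles n k f)).card = B := by
        rw [hB]
        unfold cntF
        congr 1
        ext f
        simp only [Finset.mem_filter, Finset.mem_univ, true_and, and_assoc]
      have e3 : (Finset.univ.filter (fun f : Fin n → Finset (Fin n) =>
          validChoices n k f)).card = V := by
        rw [hV]
        unfold cntF
        congr 1
      rw [e1, e2, e3] at h
      exact h
    have hpr : prFewDisjointCycles n k = (G:ℝ)/(V:ℝ) := by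
      unfold prFewDisjointCycles
      rw [hG, hV]
      unfold cntF
      norm_num
    have hVR : (0:ℝ) < V := by exact_mod_cast hVpos
    constructor
    · -- lower bound
      -- B ≤ ε n * V
      have hbb := bad_bound hkn (by omega) hn2 T hTlog hlogn hlogk
      -- (4k)^T ≤ 4k * n^{3/4}
      have hkR : (0:ℝ) < 4*(k:ℝ) := by positivity
      have h1k : (1:ℝ) ≤ 4*(k:ℝ) := by linarith
      have hceil : (T:ℝ) < x + 1 := Nat.ceil_lt_add_one hx0
      have hpow : ((4*k:ℕ):ℝ)^T ≤ 4*(k:ℝ) * (n:ℝ)^((3:ℝ)/4) := by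
        have hcast : ((4*k:ℕ):ℝ) = 4*(k:ℝ) := by push_cast; ring
        rw [hcast]
        calc (4*(k:ℝ))^T = (4*(k:ℝ))^((T:ℕ):ℝ) := (Real.rpow_natCast _ _).symm
          _ ≤ (4*(k:ℝ))^(x+1) := Real.rpow_le_rpow_of_exponent_le h1k (le_of_lt hceil)
          _ = (4*(k:ℝ))^x * (4*(k:ℝ)) := by rw [Real.rpow_add hkR, Real.rpow_one]
          _ ≤ (n:ℝ)^((3:ℝ)/4) * (4*(k:ℝ)) := by
              apply mul_le_mul_of_nonneg_right _ (by positivity)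
              rw [Real.rpow_def_of_pos hkR, Real.rpow_def_of_pos hnpos]
              apply Real.exp_le_exp.mpr
              have hlog4 : Real.log (4*(k:ℝ)) ≤ (3/2) * Real.log (2*(k:ℝ)) := by
                have e : (4:ℝ)*(k:ℝ) = 2*(2*(k:ℝ)) := by ring
                rw [e, Real.log_mul (by norm_num) (by positivity)]
                have h4 : Real.log 4 ≤ Real.log (2*(k:ℝ)) :=
                  Real.log_le_log (by norm_num) hk4
                have h42 : Real.log 4 = 2 * Real.log 2 := by
                  rw [show (4:ℝ) = 2^(2:ℕ) by norm_num, Real.log_pow]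
                  push_cast
                  ring
                linarith
              calc Real.log (4*(k:ℝ)) * x ≤ ((3/2) * Real.log (2*(k:ℝ))) * x :=
                    mul_le_mul_of_nonneg_right hlog4 hx0
                _ = Real.log n * (3/4) := by
                    rw [hxdef]
                    field_simp
                    ring
          _ = 4*(k:ℝ) * (n:ℝ)^((3:ℝ)/4) := by ring
      set t : ℝ := (n:ℝ) * Real.log (2*(k:ℝ)) / Real.log n with ht
      have htpos : 0 < t := by
        rw [ht]
        positivity
      have hn14 : (0:ℝ) < (n:ℝ)^((1:ℝ)/4) := Real.rpow_pos_of_pos hnpos _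
      have hnn : (n:ℝ)^((3:ℝ)/4) * (n:ℝ)^((1:ℝ)/4) = n := by
        rw [← Real.rpow_add hnpos]
        norm_num
      have hεt : ε n * t = 4*(k:ℝ) * (n:ℝ)^((3:ℝ)/4) := by
        have hq : (n:ℝ) / (n:ℝ)^((1:ℝ)/4) = (n:ℝ)^((3:ℝ)/4) :=
          ((eq_div_iff hn14.ne').mpr hnn).symm
        calc ε n * t = 4*(k:ℝ) * ((n:ℝ) / (n:ℝ)^((1:ℝ)/4)) *
              (Real.log (2*(k:ℝ)) / Real.log (2*(k:ℝ))) * (Real.log n / Real.log n) := by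
              simp only [hε, hc, ht]
              ring
          _ = 4*(k:ℝ) * (n:ℝ)^((3:ℝ)/4) := by
              rw [hq, div_self hlogk.ne', div_self hlogn.ne']
              ring
      have hBV : (B:ℝ) * t ≤ (ε n * V) * t := by
        calc (B:ℝ) * t ≤ (((4*k)^T * V : ℕ) : ℝ) := hbb
          _ = ((4*k:ℕ):ℝ)^T * (V:ℝ) := by push_cast; ring
          _ ≤ (4*(k:ℝ) * (n:ℝ)^((3:ℝ)/4)) * V :=
              mul_le_mul_of_nonneg_right hpow (by positivity)
          _ = (ε n * t) * V := by rw [hεt]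
          _ = (ε n * V) * t := by ring
      have hBle : (B:ℝ) ≤ ε n * V := le_of_mul_le_mul_right hBV htpos
      have hGV : (G:ℝ) = (V:ℝ) - (B:ℝ) := by
        have hcast : (G:ℝ) + (B:ℝ) = (V:ℝ) := by exact_mod_cast hgood
        linarith
      rw [hpr, hGV, le_div_iff₀ hVR]
      linarith [hBle]
    · rw [hpr]
      apply div_le_one_of_le₀
      · exact_mod_cast Nat.le.intro hgood
      · exact le_of_lt hVR
  apply tendsto_of_tendsto_of_tendsto_of_le_of_le'
    (g := fun n => 1 - ε n) (h := fun _ => (1:ℝ))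
  · simpa using (tendsto_const_nhds (x := (1:ℝ)) (f := Filter.atTop)).sub hεlim
  · exact tendsto_const_nhds
  · exact hmain.mono fun n h => h.1
  · exact hmain.mono fun n h => h.2

end Stmt6
end

section
/- Let $M_0$ be the fixed perfect matching $\{\{2i-1, 2i\} : 1 \le i \le n\}$ of $[2n]$ and let $M$ be a uniformly random perfect matching of $[2n]$. Then with high probability (as $n \to \infty$), the simple graph on $[2n]$ in which $u \sim v$ iff $u \ne v$ and ($\{u,v\} \in M_0$ or $\{u,v\} \in M$) has at most $(\log n)^2$ connected components. -/
/-!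
Statement 11: Let `M₀` be the fixed perfect matching `{{2i-1, 2i} : 1 ≤ i ≤ n}` of
`[2n]` and let `M` be a uniformly random perfect matching of `[2n]`. Then w.h.p.
(as `n → ∞`) the union graph `M₀ ∪ M` has at most `(log n)²` connected components.

We index `[2n]` by `Fin (2n)` (0-based), so `M₀` pairs `2i` with `2i+1`.
-/

open Finset

attribute [local instance] Classical.propDecidable

namespace Stmt11

/-- The fixed perfect matching pairing `2i` with `2i+1`, as a fixed-point-free
involution of `Fin (2n)`. -/
def m0 (n : ℕ) (x : Fin (2 * n)) : Fin (2 * n) :=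
  ⟨if x.val % 2 = 0 then x.val + 1 else x.val - 1, by
    have := x.isLt; split <;> omega⟩

/-- `σ` is a perfect matching of `Fin (2n)`: a fixed-point-free involution. -/
def isPM (n : ℕ) (σ : Fin (2 * n) → Fin (2 * n)) : Prop :=
  (∀ x, σ (σ x) = x) ∧ ∀ x, σ x ≠ x

/-- The simple graph on `Fin (2n)` in which `u ∼ v` iff `u ≠ v` and `{u,v}` is a pair
of `M₀` or of the matching `σ`. -/
def unionGraph (n : ℕ) (σ : Fin (2 * n) → Fin (2 * n)) : SimpleGraph (Fin (2 * n)) :=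
  SimpleGraph.fromRel (fun u v => m0 n u = v ∨ σ u = v)

/-- The probability that `M₀ ∪ M` has at most `(log n)²` connected components, for a
uniformly random perfect matching `M` of `Fin (2n)`. -/
noncomputable def prFewComponents (n : ℕ) : ℝ :=
  ((Finset.univ.filter (fun σ : Fin (2 * n) → Fin (2 * n) => isPM n σ ∧
      (Nat.card (unionGraph n σ).ConnectedComponent : ℝ) ≤ (Real.log n) ^ 2)).card : ℝ) /
  ((Finset.univ.filter (fun σ : Fin (2 * n) → Fin (2 * n) => isPM n σ)).card : ℝ)

lemma m0_val (n : ℕ) (x : Fin (2*n)) :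
    (m0 n x).val = if x.val % 2 = 0 then x.val + 1 else x.val - 1 := rfl

lemma m0_m0 (n : ℕ) (x : Fin (2*n)) : m0 n (m0 n x) = x := by
  apply Fin.ext
  rw [m0_val, m0_val]
  have := x.isLt
  split <;> split <;> omega

lemma m0_ne (n : ℕ) (x : Fin (2*n)) : m0 n x ≠ x := by
  intro h
  have h2 := congrArg Fin.val h
  rw [m0_val] at h2
  have h3 := x.isLt
  split at h2 <;> omega

lemma isPM_m0 (n : ℕ) : isPM n (m0 n) := ⟨m0_m0 n, m0_ne n⟩

lemma m0_eq_iff (n : ℕ) {u v : Fin (2*n)} : m0 n u = v ↔ m0 n v = u := by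
  constructor <;> (rintro rfl; exact m0_m0 n _)

lemma pm_eq_iff {n : ℕ} {σ} (hσ : isPM n σ) {u v : Fin (2*n)} : σ u = v ↔ σ v = u := by
  constructor <;> (rintro rfl; exact hσ.1 _)

lemma adj_iff {n : ℕ} {σ} (hσ : isPM n σ) {u v : Fin (2*n)} :
    (unionGraph n σ).Adj u v ↔ u ≠ v ∧ (m0 n u = v ∨ σ u = v) := by
  rw [unionGraph, SimpleGraph.fromRel_adj]
  constructor
  · rintro ⟨h1, (h|h)|(h|h)⟩
    · exact ⟨h1, Or.inl h⟩
    · exact ⟨h1, Or.inr h⟩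
    · exact ⟨h1, Or.inl ((m0_eq_iff n).mp h)⟩
    · exact ⟨h1, Or.inr ((pm_eq_iff hσ).mp h)⟩
  · rintro ⟨h1, h⟩; exact ⟨h1, Or.inl h⟩

def av (n : ℕ) : Fin (2*(n+1)) := ⟨2*n, by omega⟩
def bv (n : ℕ) : Fin (2*(n+1)) := ⟨2*n+1, by omega⟩
def emb (n : ℕ) (x : Fin (2*n)) : Fin (2*(n+1)) := ⟨x.val, by omega⟩

@[simp] lemma av_val (n : ℕ) : (av n).val = 2*n := rfl
@[simp] lemma bv_val (n : ℕ) : (bv n).val = 2*n+1 := rfl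
@[simp] lemma emb_val (n : ℕ) (x : Fin (2*n)) : (emb n x).val = x.val := rfl

lemma emb_inj {n : ℕ} {x y : Fin (2*n)} (h : emb n x = emb n y) : x = y := by
  apply Fin.ext
  have := congrArg Fin.val h
  simpa using this

lemma emb_ne_av {n : ℕ} (x : Fin (2*n)) : emb n x ≠ av n := by
  intro h; have h2 := congrArg Fin.val h; have h3 := x.isLt; simp at h2; omega

lemma emb_ne_bv {n : ℕ} (x : Fin (2*n)) : emb n x ≠ bv n := by
  intro h; have h2 := congrArg Fin.val h; have h3 := x.isLt; simp at h2; omega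

lemma av_ne_bv {n : ℕ} : av n ≠ bv n := by
  intro h; have h2 := congrArg Fin.val h; simp at h2

lemma lt_of_ne {n : ℕ} {z : Fin (2*(n+1))} (h1 : z ≠ av n) (h2 : z ≠ bv n) : z.val < 2*n := by
  have h1' : z.val ≠ 2*n := fun hh => h1 (Fin.ext (by simpa using hh))
  have h2' : z.val ≠ 2*n+1 := fun hh => h2 (Fin.ext (by simpa using hh))
  have := z.isLt
  omega

lemma m0_av (n : ℕ) : m0 (n+1) (av n) = bv n := by
  apply Fin.ext; rw [m0_val]; simp

lemma m0_bv (n : ℕ) : m0 (n+1) (bv n) = av n := by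
  rw [← m0_av n, m0_m0]

lemma m0_emb (n : ℕ) (x : Fin (2*n)) : m0 (n+1) (emb n x) = emb n (m0 n x) := by
  apply Fin.ext
  rw [m0_val]
  show _ = (m0 n x).val
  rw [m0_val]
  rfl


/-! ### Restriction (branch 1) and contraction (branch 2) -/

def res (n : ℕ) (σ : Fin (2*(n+1)) → Fin (2*(n+1))) (x : Fin (2*n)) : Fin (2*n) :=
  if h : (σ (emb n x)).val < 2*n then ⟨(σ (emb n x)).val, h⟩ else x

def lift1 (n : ℕ) (σ' : Fin (2*n) → Fin (2*n)) (x : Fin (2*(n+1))) : Fin (2*(n+1)) :=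
  if x = av n then bv n
  else if x = bv n then av n
  else if h : x.val < 2*n then emb n (σ' ⟨x.val, h⟩) else x

def ctr (n : ℕ) (σ : Fin (2*(n+1)) → Fin (2*(n+1))) (x : Fin (2*n)) : Fin (2*n) :=
  if σ (emb n x) = av n then (if h : (σ (bv n)).val < 2*n then ⟨(σ (bv n)).val, h⟩ else x)
  else if σ (emb n x) = bv n then (if h : (σ (av n)).val < 2*n then ⟨(σ (av n)).val, h⟩ else x)
  else if h : (σ (emb n x)).val < 2*n then ⟨(σ (emb n x)).val, h⟩ else x

def lift2 (n : ℕ) (σ' : Fin (2*n) → Fin (2*n)) (u' : Fin (2*(n+1))) :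
    Fin (2*(n+1)) → Fin (2*(n+1)) :=
  if h : u'.val < 2*n then (fun x =>
    if x = av n then emb n ⟨u'.val, h⟩
    else if x = bv n then emb n (σ' ⟨u'.val, h⟩)
    else if h2 : x.val < 2*n then
      (if (⟨u'.val, h⟩ : Fin (2*n)) = ⟨x.val, h2⟩ then av n
       else if σ' ⟨u'.val, h⟩ = ⟨x.val, h2⟩ then bv n
       else emb n (σ' ⟨x.val, h2⟩))
    else x)
  else id

section Branch1
variable {n : ℕ} {σ : Fin (2*(n+1)) → Fin (2*(n+1))}
  (hσ : isPM (n+1) σ) (hab : σ (av n) = bv n)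

include hσ hab

lemma sigma_bv : σ (bv n) = av n := by rw [← hab, hσ.1]

lemma sigma_emb_lt (x : Fin (2*n)) : (σ (emb n x)).val < 2*n := by
  apply lt_of_ne
  · intro h
    have : emb n x = σ (av n) := by rw [← h, hσ.1]
    rw [hab] at this
    exact emb_ne_bv x this
  · intro h
    have : emb n x = σ (bv n) := by rw [← h, hσ.1]
    rw [sigma_bv hσ hab] at this
    exact emb_ne_av x this

lemma emb_res (x : Fin (2*n)) : emb n (res n σ x) = σ (emb n x) := by
  rw [res, dif_pos (sigma_emb_lt hσ hab x)]
  apply Fin.ext; simp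

lemma isPM_res : isPM n (res n σ) := by
  constructor
  · intro x
    apply emb_inj
    rw [emb_res hσ hab, emb_res hσ hab, hσ.1]
  · intro x h
    have := emb_res hσ hab x
    rw [h] at this
    exact hσ.2 _ this.symm

lemma lift1_res : lift1 n (res n σ) = σ := by
  funext x
  rw [lift1]
  by_cases h1 : x = av n
  · rw [if_pos h1, h1, hab]
  by_cases h2 : x = bv n
  · rw [if_neg h1, if_pos h2, h2, sigma_bv hσ hab]
  rw [if_neg h1, if_neg h2, dif_pos (lt_of_ne h1 h2)]
  have : (⟨x.val, lt_of_ne h1 h2⟩ : Fin (2*n)) = ⟨x.val, lt_of_ne h1 h2⟩ := rfl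
  have hx : emb n (⟨x.val, lt_of_ne h1 h2⟩ : Fin (2*n)) = x := Fin.ext rfl
  rw [emb_res hσ hab, hx]

end Branch1

section Branch1b
variable {n : ℕ} {σ' : Fin (2*n) → Fin (2*n)} (hσ' : isPM n σ')
include hσ'

omit hσ' in
lemma lift1_emb (x : Fin (2*n)) : lift1 n σ' (emb n x) = emb n (σ' x) := by
  rw [lift1, if_neg (emb_ne_av x), if_neg (emb_ne_bv x), dif_pos (show (emb n x).val < 2*n from x.isLt)]
  exact congrArg (fun y => emb n (σ' y)) (Fin.ext rfl)

omit hσ' in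
lemma lift1_av : lift1 n σ' (av n) = bv n := by rw [lift1, if_pos rfl]

omit hσ' in
lemma lift1_bv : lift1 n σ' (bv n) = av n := by
  rw [lift1, if_neg (Ne.symm av_ne_bv), if_pos rfl]

lemma isPM_lift1 : isPM (n+1) (lift1 n σ') := by
  constructor
  · intro x
    by_cases h1 : x = av n
    · rw [h1, lift1_av, lift1_bv]
    by_cases h2 : x = bv n
    · rw [h2, lift1_bv, lift1_av]
    · have hx : emb n (⟨x.val, lt_of_ne h1 h2⟩ : Fin (2*n)) = x := Fin.ext rfl
      rw [← hx, lift1_emb, lift1_emb, hσ'.1]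
  · intro x
    by_cases h1 : x = av n
    · rw [h1, lift1_av]; exact Ne.symm av_ne_bv
    by_cases h2 : x = bv n
    · rw [h2, lift1_bv]; exact av_ne_bv
    · have hx : emb n (⟨x.val, lt_of_ne h1 h2⟩ : Fin (2*n)) = x := Fin.ext rfl
      rw [← hx, lift1_emb]
      intro h
      exact hσ'.2 _ (emb_inj h)

lemma res_lift1 : res n (lift1 n σ') = σ' := by
  funext x
  apply emb_inj
  rw [emb_res (isPM_lift1 hσ') (lift1_av), lift1_emb]

end Branch1b


section Branch2
variable {n : ℕ} {σ : Fin (2*(n+1)) → Fin (2*(n+1))}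
  (hσ : isPM (n+1) σ) (hab : σ (av n) ≠ bv n)
include hσ hab

lemma sa_ne_av : σ (av n) ≠ av n := hσ.2 _
lemma sb_ne_bv : σ (bv n) ≠ bv n := hσ.2 _
lemma sb_ne_av : σ (bv n) ≠ av n := by
  intro h
  apply hab
  rw [← h, hσ.1]
lemma sa_lt : (σ (av n)).val < 2*n := lt_of_ne (sa_ne_av hσ hab) hab
lemma sb_lt : (σ (bv n)).val < 2*n := lt_of_ne (sb_ne_av hσ hab) (sb_ne_bv hσ hab)
lemma sa_ne_sb : σ (av n) ≠ σ (bv n) := by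
  intro h
  have : av n = bv n := by rw [← hσ.1 (av n), h, hσ.1]
  exact av_ne_bv this

/-- the low copy of `σ (av n)` -/
def ua : Fin (2*n) := ⟨(σ (av n)).val, sa_lt hσ hab⟩
/-- the low copy of `σ (bv n)` -/
def wa : Fin (2*n) := ⟨(σ (bv n)).val, sb_lt hσ hab⟩

lemma emb_ua : emb n (ua hσ hab) = σ (av n) := Fin.ext rfl
lemma emb_wa : emb n (wa hσ hab) = σ (bv n) := Fin.ext rfl

lemma ua_ne_wa : ua hσ hab ≠ wa hσ hab := by
  intro h
  exact sa_ne_sb hσ hab (by rw [← emb_ua hσ hab, ← emb_wa hσ hab, h])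

lemma ctr_ua : ctr n σ (ua hσ hab) = wa hσ hab := by
  rw [ctr, emb_ua hσ hab, hσ.1, if_pos rfl, dif_pos (sb_lt hσ hab)]
  rfl

lemma ctr_wa : ctr n σ (wa hσ hab) = ua hσ hab := by
  have h1 : σ (emb n (wa hσ hab)) = bv n := by rw [emb_wa hσ hab, hσ.1]
  rw [ctr, h1, if_neg (Ne.symm av_ne_bv : ¬ bv n = av n), if_pos rfl,
    dif_pos (sa_lt hσ hab)]
  rfl

lemma ctr_other {x : Fin (2*n)} (hx1 : x ≠ ua hσ hab) (hx2 : x ≠ wa hσ hab) :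
    emb n (ctr n σ x) = σ (emb n x) ∧ σ (emb n x) ≠ av n ∧ σ (emb n x) ≠ bv n := by
  have h1 : σ (emb n x) ≠ av n := by
    intro h
    apply hx1
    apply emb_inj
    rw [emb_ua hσ hab, ← h, hσ.1]
  have h2 : σ (emb n x) ≠ bv n := by
    intro h
    apply hx2
    apply emb_inj
    rw [emb_wa hσ hab, ← h, hσ.1]
  refine ⟨?_, h1, h2⟩
  rw [ctr, if_neg h1, if_neg h2, dif_pos (lt_of_ne h1 h2)]
  exact Fin.ext rfl

lemma isPM_ctr : isPM n (ctr n σ) := by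
  have hinj : ∀ y z : Fin (2*(n+1)), σ y = σ z → y = z := by
    intro y z h
    rw [← hσ.1 y, h, hσ.1]
  constructor
  · intro x
    by_cases hx1 : x = ua hσ hab
    · rw [hx1, ctr_ua hσ hab, ctr_wa hσ hab]
    by_cases hx2 : x = wa hσ hab
    · rw [hx2, ctr_wa hσ hab, ctr_ua hσ hab]
    obtain ⟨he, h1, h2⟩ := ctr_other hσ hab hx1 hx2
    have hy1 : ctr n σ x ≠ ua hσ hab := by
      intro h
      have h5 : σ (emb n (ctr n σ x)) = σ (σ (emb n x)) := by rw [he]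
      rw [h, emb_ua hσ hab, hσ.1, hσ.1] at h5
      exact emb_ne_av x h5.symm
    have hy2 : ctr n σ x ≠ wa hσ hab := by
      intro h
      have h5 : σ (emb n (ctr n σ x)) = σ (σ (emb n x)) := by rw [he]
      rw [h, emb_wa hσ hab, hσ.1, hσ.1] at h5
      exact emb_ne_bv x h5.symm
    obtain ⟨he2, _, _⟩ := ctr_other hσ hab hy1 hy2
    apply emb_inj
    rw [he2, he, hσ.1]
  · intro x h
    by_cases hx1 : x = ua hσ hab
    · rw [hx1, ctr_ua hσ hab] at h
      exact ua_ne_wa hσ hab h.symm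
    by_cases hx2 : x = wa hσ hab
    · rw [hx2, ctr_wa hσ hab] at h
      exact ua_ne_wa hσ hab h
    obtain ⟨he, _, _⟩ := ctr_other hσ hab hx1 hx2
    rw [h] at he
    exact hσ.2 (emb n x) he.symm

lemma lift2_ctr : lift2 n (ctr n σ) (σ (av n)) = σ := by
  funext x
  have hu : (σ (av n)).val < 2*n := sa_lt hσ hab
  have hufin : (⟨(σ (av n)).val, hu⟩ : Fin (2*n)) = ua hσ hab := rfl
  rw [lift2, dif_pos hu]
  simp only [hufin]
  by_cases h1 : x = av n
  · rw [if_pos h1, h1, emb_ua hσ hab]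
  rw [if_neg h1]
  by_cases h2 : x = bv n
  · rw [if_pos h2, h2, ctr_ua hσ hab, emb_wa hσ hab]
  rw [if_neg h2]
  rw [dif_pos (lt_of_ne h1 h2)]
  set xl : Fin (2*n) := ⟨x.val, lt_of_ne h1 h2⟩ with hxl
  have hex : emb n xl = x := Fin.ext rfl
  by_cases h3 : ua hσ hab = xl
  · rw [if_pos h3]
    rw [← hex, ← h3, emb_ua hσ hab, hσ.1]
  rw [if_neg h3]
  by_cases h4 : ctr n σ (ua hσ hab) = xl
  · rw [if_pos h4]
    rw [ctr_ua hσ hab] at h4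
    rw [← hex, ← h4, emb_wa hσ hab, hσ.1]
  rw [if_neg h4]
  have hx1 : xl ≠ ua hσ hab := fun h => h3 h.symm
  have hx2 : xl ≠ wa hσ hab := by
    rw [ctr_ua hσ hab] at h4
    exact fun h => h4 h.symm
  obtain ⟨he, _, _⟩ := ctr_other hσ hab hx1 hx2
  rw [he, hex]

end Branch2

section Branch2b
variable {n : ℕ} {σ' : Fin (2*n) → Fin (2*n)} {u : Fin (2*n)} (hσ' : isPM n σ')

lemma lift2_av : lift2 n σ' (emb n u) (av n) = emb n u := by
  rw [lift2, dif_pos (show (emb n u).val < 2*n from u.isLt)]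
  simp only [if_pos rfl]
  exact congrArg (emb n) (Fin.ext rfl)

lemma lift2_bv : lift2 n σ' (emb n u) (bv n) = emb n (σ' u) := by
  rw [lift2, dif_pos (show (emb n u).val < 2*n from u.isLt)]
  simp only [if_neg (Ne.symm (av_ne_bv)), if_pos rfl]
  exact congrArg (fun y => emb n (σ' y)) (Fin.ext rfl)

lemma lift2_emb (x : Fin (2*n)) :
    lift2 n σ' (emb n u) (emb n x) =
      (if u = x then av n else if σ' u = x then bv n else emb n (σ' x)) := by
  rw [lift2, dif_pos (show (emb n u).val < 2*n from u.isLt)]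
  simp only [if_neg (emb_ne_av x), if_neg (emb_ne_bv x)]
  rw [dif_pos (show (emb n x).val < 2*n from x.isLt)]
  have h1 : (⟨(emb n u).val, u.isLt⟩ : Fin (2*n)) = u := Fin.ext rfl
  have h2 : (⟨(emb n x).val, x.isLt⟩ : Fin (2*n)) = x := Fin.ext rfl
  simp only [h1, h2]

include hσ'

lemma isPM_lift2 : isPM (n+1) (lift2 n σ' (emb n u)) := by
  have hwu : σ' u ≠ u := hσ'.2 u
  have hinj : ∀ y z : Fin (2*n), σ' y = σ' z → y = z := by
    intro y z h
    rw [← hσ'.1 y, h, hσ'.1]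
  constructor
  · intro x
    by_cases h1 : x = av n
    · rw [h1, lift2_av, lift2_emb, if_pos rfl]
    by_cases h2 : x = bv n
    · rw [h2, lift2_bv, lift2_emb, if_neg (fun h => hwu h.symm), if_pos rfl]
    have hex : emb n (⟨x.val, lt_of_ne h1 h2⟩ : Fin (2*n)) = x := Fin.ext rfl
    set xl : Fin (2*n) := ⟨x.val, lt_of_ne h1 h2⟩ with hxl
    rw [← hex, lift2_emb]
    by_cases h3 : u = xl
    · rw [if_pos h3, lift2_av, h3]
    rw [if_neg h3]
    by_cases h4 : σ' u = xl
    · rw [if_pos h4, lift2_bv, h4]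
    rw [if_neg h4, lift2_emb]
    have h5 : u ≠ σ' xl := by
      intro h
      apply h4
      rw [h, hσ'.1]
    have h6 : σ' u ≠ σ' xl := fun h => h3 (hinj _ _ h)
    rw [if_neg h5, if_neg h6, hσ'.1]
  · intro x
    by_cases h1 : x = av n
    · rw [h1, lift2_av]; exact emb_ne_av u
    by_cases h2 : x = bv n
    · rw [h2, lift2_bv]; exact emb_ne_bv (σ' u)
    have hex : emb n (⟨x.val, lt_of_ne h1 h2⟩ : Fin (2*n)) = x := Fin.ext rfl
    set xl : Fin (2*n) := ⟨x.val, lt_of_ne h1 h2⟩ with hxl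
    rw [← hex, lift2_emb]
    by_cases h3 : u = xl
    · rw [if_pos h3]; exact Ne.symm (emb_ne_av xl)
    rw [if_neg h3]
    by_cases h4 : σ' u = xl
    · rw [if_pos h4]; exact Ne.symm (emb_ne_bv xl)
    rw [if_neg h4]
    intro h
    exact hσ'.2 xl (emb_inj h)

lemma lift2_av_ne_bv : lift2 n σ' (emb n u) (av n) ≠ bv n := by
  rw [lift2_av]; exact emb_ne_bv u

lemma ctr_lift2 : ctr n (lift2 n σ' (emb n u)) = σ' := by
  set τ := lift2 n σ' (emb n u) with hτ
  have hpm : isPM (n+1) τ := isPM_lift2 hσ'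
  have hne : τ (av n) ≠ bv n := lift2_av_ne_bv hσ'
  have hua : ua hpm hne = u := by
    apply emb_inj
    rw [emb_ua hpm hne, hτ, lift2_av]
  have hwa : wa hpm hne = σ' u := by
    apply emb_inj
    rw [emb_wa hpm hne, hτ, lift2_bv]
  funext x
  by_cases h1 : x = u
  · rw [h1, ← hua, ctr_ua hpm hne, hwa, hua]
  by_cases h2 : x = σ' u
  · rw [h2, ← hwa, ctr_wa hpm hne, hua, hwa, hσ'.1]
  have hx1 : x ≠ ua hpm hne := by rw [hua]; exact h1
  have hx2 : x ≠ wa hpm hne := by rw [hwa]; exact h2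
  obtain ⟨he, _, _⟩ := ctr_other hpm hne hx1 hx2
  apply emb_inj
  rw [he, hτ, lift2_emb, if_neg (fun h => h1 h.symm), if_neg (fun h => h2 h.symm)]

end Branch2b


/-! ### Generic component-count transfer lemmas -/

open SimpleGraph

lemma reach_map {V W : Type*} {G : SimpleGraph V} {H : SimpleGraph W} (f : V → W)
    (hf : ∀ x y, G.Adj x y → H.Reachable (f x) (f y)) {x y : V} (hr : G.Reachable x y) :
    H.Reachable (f x) (f y) := by
  obtain ⟨w⟩ := hr
  induction w with
  | nil => exact Reachable.refl _
  | cons h p ih => exact (hf _ _ h).trans ih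

lemma eq_on_reach {V : Type*} {β : Sort*} {G : SimpleGraph V} (f : V → β)
    (hf : ∀ x y, G.Adj x y → f x = f y) {x y : V} (hr : G.Reachable x y) : f x = f y := by
  obtain ⟨w⟩ := hr
  induction w with
  | nil => rfl
  | cons h p ih => exact (hf _ _ h).trans ih

lemma card_cc_eq {V W : Type*} {G : SimpleGraph V} {H : SimpleGraph W}
    (f : V → W) (g : W → V)
    (hf : ∀ x y, G.Adj x y → H.Reachable (f x) (f y))
    (hg : ∀ x y, H.Adj x y → G.Reachable (g x) (g y))
    (hgf : ∀ x, G.Reachable (g (f x)) x)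
    (hfg : ∀ y, H.Reachable (f (g y)) y) :
    Nat.card G.ConnectedComponent = Nat.card H.ConnectedComponent := by
  apply Nat.card_congr
  refine ⟨Quot.lift (fun v => H.connectedComponentMk (f v))
      (fun a b h => ConnectedComponent.sound (reach_map f hf h)),
    Quot.lift (fun w => G.connectedComponentMk (g w))
      (fun a b h => ConnectedComponent.sound (reach_map g hg h)), ?_, ?_⟩
  · intro c
    induction c using SimpleGraph.ConnectedComponent.ind with
    | h v => exact ConnectedComponent.sound (hgf v)
  · intro c
    induction c using SimpleGraph.ConnectedComponent.ind with
    | h v => exact ConnectedComponent.sound (hfg v)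

lemma card_cc_succ {V W : Type*} [Finite W] {G : SimpleGraph V} {H : SimpleGraph W}
    (f : V → H.ConnectedComponent ⊕ Unit) (g : H.ConnectedComponent ⊕ Unit → V)
    (hf : ∀ x y, G.Adj x y → f x = f y)
    (hfg : ∀ y, f (g y) = y)
    (hgf : ∀ x, G.Reachable (g (f x)) x) :
    Nat.card G.ConnectedComponent = Nat.card H.ConnectedComponent + 1 := by
  have key : Nat.card G.ConnectedComponent = Nat.card (H.ConnectedComponent ⊕ Unit) := by
    apply Nat.card_congr
    refine ⟨Quot.lift f (fun a b h => eq_on_reach f hf h),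
      fun y => G.connectedComponentMk (g y), ?_, ?_⟩
    · intro c
      induction c using SimpleGraph.ConnectedComponent.ind with
      | h v => exact ConnectedComponent.sound (hgf v)
    · intro y; exact hfg y
  rw [key, Nat.card_sum]
  simp

/-! ### Component counts under restriction / contraction -/

section CardBranch1
variable {n : ℕ} {σ : Fin (2*(n+1)) → Fin (2*(n+1))}
  (hσ : isPM (n+1) σ) (hab : σ (av n) = bv n)
include hσ hab

lemma branch1_card :
    Nat.card (unionGraph (n+1) σ).ConnectedComponent
      = Nat.card (unionGraph n (res n σ)).ConnectedComponent + 1 := by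
  set G := unionGraph (n+1) σ with hG
  set H := unionGraph n (res n σ) with hH
  have hpm' : isPM n (res n σ) := isPM_res hσ hab
  have hembadj : ∀ a b : Fin (2*n), H.Adj a b → G.Adj (emb n a) (emb n b) := by
    intro a b h
    rw [adj_iff hpm'] at h
    rw [adj_iff hσ]
    refine ⟨fun hh => h.1 (emb_inj hh), ?_⟩
    rcases h.2 with h2 | h2
    · left; rw [m0_emb, h2]
    · right; rw [← emb_res hσ hab, h2]
  classical
  have hyhigh : ∀ y : Fin (2*(n+1)), ¬ y.val < 2*n → y = av n ∨ y = bv n := by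
    intro y hy
    have := y.isLt
    rcases Nat.eq_or_lt_of_le (Nat.le_of_not_lt hy) with h | h
    · left; exact Fin.ext h.symm
    · right; apply Fin.ext; show y.val = 2*n+1; omega
  classical
  refine card_cc_succ
    (f := fun x => if h : x.val < 2*n then
        Sum.inl (H.connectedComponentMk ⟨x.val, h⟩) else Sum.inr Unit.unit)
    (g := Sum.elim (fun c => emb n c.out) (fun _ => av n)) ?_ ?_ ?_
  · intro x y hadj
    have hxy := (adj_iff hσ).mp hadj
    by_cases hx : x.val < 2*n <;> by_cases hy : y.val < 2*n
    · -- both low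
      rw [dif_pos hx, dif_pos hy]
      set xl : Fin (2*n) := ⟨x.val, hx⟩
      set yl : Fin (2*n) := ⟨y.val, hy⟩
      have hex : emb n xl = x := Fin.ext rfl
      have hey : emb n yl = y := Fin.ext rfl
      have hadj' : H.Adj xl yl := by
        rw [adj_iff hpm']
        refine ⟨fun hh => hxy.1 (by rw [← hex, ← hey, hh]), ?_⟩
        rcases hxy.2 with h2 | h2
        · left
          apply emb_inj
          rw [← m0_emb, hex, hey, h2]
        · right
          apply emb_inj
          rw [emb_res hσ hab, hex, hey, h2]
      exact congrArg Sum.inl (ConnectedComponent.connectedComponentMk_eq_of_adj hadj')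
    · -- x low, y high : impossible
      exfalso
      set xl : Fin (2*n) := ⟨x.val, hx⟩
      have hex : emb n xl = x := Fin.ext rfl
      rcases hxy.2 with h2 | h2
      · have : m0 (n+1) x = emb n (m0 n xl) := by rw [← hex, m0_emb]
        rw [h2] at this
        have := congrArg Fin.val this
        simp at this
        have := (m0 n xl).isLt
        omega
      · rcases hyhigh y hy with rfl | rfl
        · have : x = σ (av n) := by rw [← h2, hσ.1]
          rw [hab] at this
          rw [this] at hx
          simp at hx
        · have : x = σ (bv n) := by rw [← h2, hσ.1]
          rw [sigma_bv hσ hab] at this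
          rw [this] at hx
          simp at hx
    · -- x high, y low : impossible
      exfalso
      rcases hyhigh x hx with rfl | rfl
      · rcases hxy.2 with h2 | h2
        · rw [m0_av] at h2; rw [← h2] at hy; simp at hy
        · rw [hab] at h2; rw [← h2] at hy; simp at hy
      · rcases hxy.2 with h2 | h2
        · rw [m0_bv] at h2; rw [← h2] at hy; simp at hy
        · rw [sigma_bv hσ hab] at h2; rw [← h2] at hy; simp at hy
    · rw [dif_neg hx, dif_neg hy]
  · intro y
    rcases y with c | u
    · dsimp only [Sum.elim_inl]
      refine (dif_pos (show (emb n c.out).val < 2*n from c.out.isLt)).trans ?_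
      have h1 : (⟨(emb n c.out).val, c.out.isLt⟩ : Fin (2*n)) = c.out := Fin.ext rfl
      exact congrArg Sum.inl ((congrArg H.connectedComponentMk h1).trans (Quot.out_eq c))
    · dsimp only [Sum.elim_inr]
      exact dif_neg (show ¬ (av n).val < 2*n by simp)
  · intro x
    by_cases hx : x.val < 2*n
    · rw [dif_pos hx]
      dsimp only [Sum.elim_inl]
      set xl : Fin (2*n) := ⟨x.val, hx⟩
      have hex : emb n xl = x := Fin.ext rfl
      have hreach : H.Reachable (H.connectedComponentMk xl).out xl :=
        ConnectedComponent.exact (Quot.out_eq _)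
      have := reach_map (emb n) (fun a b h => (hembadj a b h).reachable) hreach
      rwa [hex] at this
    · rw [dif_neg hx]
      dsimp only [Sum.elim_inr]
      rcases hyhigh x hx with rfl | rfl
      · exact Reachable.refl _
      · refine Adj.reachable ?_
        rw [adj_iff hσ]
        exact ⟨av_ne_bv, Or.inl (m0_av n)⟩
end CardBranch1


section CardBranch2
variable {n : ℕ} {σ : Fin (2*(n+1)) → Fin (2*(n+1))}
  (hσ : isPM (n+1) σ) (hab : σ (av n) ≠ bv n)
include hσ hab

lemma branch2_card :
    Nat.card (unionGraph (n+1) σ).ConnectedComponent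
      = Nat.card (unionGraph n (ctr n σ)).ConnectedComponent := by
  set G := unionGraph (n+1) σ with hG
  set H := unionGraph n (ctr n σ) with hH
  have hpm' : isPM n (ctr n σ) := isPM_ctr hσ hab
  have hyhigh : ∀ y : Fin (2*(n+1)), ¬ y.val < 2*n → y = av n ∨ y = bv n := by
    intro y hy
    have := y.isLt
    rcases Nat.eq_or_lt_of_le (Nat.le_of_not_lt hy) with h | h
    · left; exact Fin.ext h.symm
    · right; apply Fin.ext; show y.val = 2*n+1; omega
  -- basic reachabilities in G
  have hsa_av : G.Adj (σ (av n)) (av n) := by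
    rw [adj_iff hσ]
    exact ⟨hσ.2 _, Or.inr (hσ.1 _)⟩
  have hav_bv : G.Adj (av n) (bv n) := by
    rw [adj_iff hσ]
    exact ⟨av_ne_bv, Or.inl (m0_av n)⟩
  have hbv_sb : G.Adj (bv n) (σ (bv n)) := by
    rw [adj_iff hσ]
    exact ⟨Ne.symm (sb_ne_bv hσ hab), Or.inr rfl⟩
  have hua_wa_G : G.Reachable (emb n (ua hσ hab)) (emb n (wa hσ hab)) := by
    rw [emb_ua hσ hab, emb_wa hσ hab]
    exact (hsa_av.reachable.trans hav_bv.reachable).trans hbv_sb.reachable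
  have hua_wa_H : H.Adj (ua hσ hab) (wa hσ hab) := by
    rw [adj_iff hpm']
    exact ⟨ua_ne_wa hσ hab, Or.inr (ctr_ua hσ hab)⟩
  classical
  refine card_cc_eq
    (f := fun x => if h : x.val < 2*n then (⟨x.val, h⟩ : Fin (2*n)) else ua hσ hab)
    (g := emb n) ?_ ?_ ?_ ?_
  · intro x y hadj
    have hxy := (adj_iff hσ).mp hadj
    by_cases hx : x.val < 2*n <;> by_cases hy : y.val < 2*n
    · -- both low
      rw [dif_pos hx, dif_pos hy]
      set xl : Fin (2*n) := ⟨x.val, hx⟩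
      set yl : Fin (2*n) := ⟨y.val, hy⟩
      have hex : emb n xl = x := Fin.ext rfl
      have hey : emb n yl = y := Fin.ext rfl
      have hne : xl ≠ yl := fun hh => hxy.1 (by rw [← hex, ← hey, hh])
      rcases hxy.2 with h2 | h2
      · refine Adj.reachable ?_
        rw [adj_iff hpm']
        refine ⟨hne, Or.inl ?_⟩
        apply emb_inj
        rw [← m0_emb, hex, hey, h2]
      · -- σ x = y, both low
        have hx1 : xl ≠ ua hσ hab := by
          intro hh
          have : σ x = av n := by
            rw [← hex, hh, emb_ua hσ hab, hσ.1]
          rw [h2] at this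
          rw [this] at hy
          simp at hy
        have hx2 : xl ≠ wa hσ hab := by
          intro hh
          have : σ x = bv n := by
            rw [← hex, hh, emb_wa hσ hab, hσ.1]
          rw [h2] at this
          rw [this] at hy
          simp at hy
        obtain ⟨he, _, _⟩ := ctr_other hσ hab hx1 hx2
        refine Adj.reachable ?_
        rw [adj_iff hpm']
        refine ⟨hne, Or.inr ?_⟩
        apply emb_inj
        rw [he, hex, hey, h2]
    · -- x low, y high
      rw [dif_pos hx, dif_neg hy]
      set xl : Fin (2*n) := ⟨x.val, hx⟩
      have hex : emb n xl = x := Fin.ext rfl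
      rcases hxy.2 with h2 | h2
      · exfalso
        have : m0 (n+1) x = emb n (m0 n xl) := by rw [← hex, m0_emb]
        rw [h2] at this
        rw [this] at hy
        exact hy (m0 n xl).isLt
      · rcases hyhigh y hy with rfl | rfl
        · -- σ x = av, so xl = ua
          have : xl = ua hσ hab := by
            apply emb_inj
            rw [emb_ua hσ hab, hex, ← h2, hσ.1]
          rw [this]
        · have : xl = wa hσ hab := by
            apply emb_inj
            rw [emb_wa hσ hab, hex, ← h2, hσ.1]
          rw [this]
          exact hua_wa_H.reachable.symm
    · -- x high, y low
      rw [dif_neg hx, dif_pos hy]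
      set yl : Fin (2*n) := ⟨y.val, hy⟩
      have hey : emb n yl = y := Fin.ext rfl
      rcases hyhigh x hx with rfl | rfl
      · rcases hxy.2 with h2 | h2
        · exfalso; rw [m0_av] at h2; rw [← h2] at hy; simp at hy
        · have : yl = ua hσ hab := by
            apply emb_inj
            rw [emb_ua hσ hab, hey, h2]
          rw [this]
      · rcases hxy.2 with h2 | h2
        · exfalso; rw [m0_bv] at h2; rw [← h2] at hy; simp at hy
        · have : yl = wa hσ hab := by
            apply emb_inj
            rw [emb_wa hσ hab, hey, h2]
          rw [this]
          exact hua_wa_H.reachable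
    · rw [dif_neg hx, dif_neg hy]
  · intro a b hadj
    have hab' := (adj_iff hpm').mp hadj
    rcases hab'.2 with h2 | h2
    · refine Adj.reachable ?_
      rw [adj_iff hσ]
      exact ⟨fun hh => hab'.1 (emb_inj hh), Or.inl (by rw [m0_emb, h2])⟩
    · by_cases ha1 : a = ua hσ hab
      · subst ha1
        rw [ctr_ua hσ hab] at h2
        rw [← h2]
        exact hua_wa_G
      by_cases ha2 : a = wa hσ hab
      · subst ha2
        rw [ctr_wa hσ hab] at h2
        rw [← h2]
        exact hua_wa_G.symm
      obtain ⟨he, _, _⟩ := ctr_other hσ hab ha1 ha2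
      refine Adj.reachable ?_
      rw [adj_iff hσ]
      exact ⟨fun hh => hab'.1 (emb_inj hh), Or.inr (by rw [← he, h2])⟩
  · intro x
    by_cases hx : x.val < 2*n
    · rw [dif_pos hx]
      have hex : emb n (⟨x.val, hx⟩ : Fin (2*n)) = x := Fin.ext rfl
      rw [hex]
    · rw [dif_neg hx]
      rw [emb_ua hσ hab]
      rcases hyhigh x hx with rfl | rfl
      · exact hsa_av.reachable
      · exact hsa_av.reachable.trans hav_bv.reachable
  · intro a
    rw [dif_pos (show (emb n a).val < 2*n from a.isLt)]
    have : (⟨(emb n a).val, a.isLt⟩ : Fin (2*n)) = a := Fin.ext rfl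
    rw [this]

end CardBranch2


/-! ### Counting -/

noncomputable def Xc (n : ℕ) (σ : Fin (2*n) → Fin (2*n)) : ℕ :=
  Nat.card (unionGraph n σ).ConnectedComponent

noncomputable def PMset (n : ℕ) : Finset (Fin (2*n) → Fin (2*n)) :=
  Finset.univ.filter (fun σ => isPM n σ)

noncomputable def Pn (n : ℕ) : ℕ := (PMset n).card
noncomputable def Sn (n : ℕ) : ℕ := ∑ σ ∈ PMset n, Xc n σ

lemma mem_PMset {n : ℕ} {σ : Fin (2*n) → Fin (2*n)} : σ ∈ PMset n ↔ isPM n σ := by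
  rw [PMset, Finset.mem_filter]
  simp

lemma Pn_zero : Pn 0 = 1 := by
  rw [Pn, PMset]
  have : ∀ σ : Fin (2*0) → Fin (2*0), isPM 0 σ := by
    intro σ
    constructor <;> intro x <;> exact absurd x.isLt (by omega)
  rw [Finset.filter_true_of_mem (fun σ _ => this σ)]
  simp [Finset.card_univ]

lemma Sn_zero : Sn 0 = 0 := by
  rw [Sn]
  apply Finset.sum_eq_zero
  intro σ _
  rw [Xc]
  have hie : IsEmpty (Fin (2*0)) := ⟨fun x => absurd x.isLt (by omega)⟩
  have : IsEmpty (unionGraph 0 σ).ConnectedComponent := SimpleGraph.ConnectedComponent.isEmpty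
  exact Nat.card_of_isEmpty

/-- the auxiliary finset of "low" vertices -/
noncomputable def lowSet (n : ℕ) : Finset (Fin (2*(n+1))) :=
  Finset.univ.filter (fun u' => u'.val < 2*n)

lemma card_lowSet (n : ℕ) : (lowSet n).card = 2*n := by
  have : lowSet n = Finset.univ.map ⟨emb n, fun a b h => emb_inj h⟩ := by
    ext u'
    simp only [lowSet, Finset.mem_filter, Finset.mem_univ, true_and, Finset.mem_map,
      Function.Embedding.coeFn_mk]
    constructor
    · intro h
      exact ⟨⟨u'.val, h⟩, Fin.ext rfl⟩
    · rintro ⟨x, rfl⟩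
      exact x.isLt
  rw [this, Finset.card_map]
  simp

section Recursion
variable (n : ℕ)

lemma sum_split (F : (Fin (2*(n+1)) → Fin (2*(n+1))) → ℕ) :
    ∑ σ ∈ PMset (n+1), F σ
      = (∑ σ ∈ (PMset (n+1)).filter (fun σ => σ (av n) = bv n), F σ)
        + ∑ σ ∈ (PMset (n+1)).filter (fun σ => ¬ σ (av n) = bv n), F σ :=
  (Finset.sum_filter_add_sum_filter_not _ _ _).symm

lemma sumA (F : (Fin (2*(n+1)) → Fin (2*(n+1))) → ℕ) :
    ∑ σ ∈ (PMset (n+1)).filter (fun σ => σ (av n) = bv n), F σ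
      = ∑ σ' ∈ PMset n, F (lift1 n σ') := by
  refine Finset.sum_nbij' (res n) (lift1 n) ?_ ?_ ?_ ?_ ?_
  · intro σ hσ
    rw [Finset.mem_filter] at hσ
    obtain ⟨h1, h2⟩ := hσ
    rw [mem_PMset] at h1 ⊢
    exact isPM_res h1 h2
  · intro σ' hσ'
    rw [mem_PMset] at hσ'
    rw [Finset.mem_filter, mem_PMset]
    exact ⟨isPM_lift1 hσ', lift1_av⟩
  · intro σ hσ
    rw [Finset.mem_filter, mem_PMset] at hσ
    exact lift1_res hσ.1 hσ.2
  · intro σ' hσ'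
    rw [mem_PMset] at hσ'
    exact res_lift1 hσ'
  · intro σ hσ
    rw [Finset.mem_filter, mem_PMset] at hσ
    rw [lift1_res hσ.1 hσ.2]

lemma sumB (F : (Fin (2*(n+1)) → Fin (2*(n+1))) → ℕ)
    (G' : (Fin (2*n) → Fin (2*n)) → ℕ)
    (hFG : ∀ σ, isPM (n+1) σ → ¬ σ (av n) = bv n → F σ = G' (ctr n σ)) :
    ∑ σ ∈ (PMset (n+1)).filter (fun σ => ¬ σ (av n) = bv n), F σ
      = ∑ p ∈ (PMset n) ×ˢ lowSet n, G' p.1 := by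
  refine Finset.sum_nbij' (fun σ => (ctr n σ, σ (av n)))
    (fun p => lift2 n p.1 p.2) ?_ ?_ ?_ ?_ ?_
  · intro σ hσ
    rw [Finset.mem_filter, mem_PMset] at hσ
    rw [Finset.mem_product, mem_PMset]
    refine ⟨isPM_ctr hσ.1 hσ.2, ?_⟩
    rw [lowSet, Finset.mem_filter]
    exact ⟨Finset.mem_univ _, sa_lt hσ.1 hσ.2⟩
  · rintro ⟨σ', u'⟩ hp
    rw [Finset.mem_product, mem_PMset] at hp
    obtain ⟨h1, h2⟩ := hp
    rw [lowSet, Finset.mem_filter] at h2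
    have hu : u'.val < 2*n := h2.2
    have he : emb n ⟨u'.val, hu⟩ = u' := Fin.ext rfl
    rw [Finset.mem_filter, mem_PMset]
    dsimp only
    rw [← he]
    exact ⟨isPM_lift2 h1, lift2_av_ne_bv h1⟩
  · intro σ hσ
    rw [Finset.mem_filter, mem_PMset] at hσ
    exact lift2_ctr hσ.1 hσ.2
  · rintro ⟨σ', u'⟩ hp
    rw [Finset.mem_product, mem_PMset] at hp
    obtain ⟨h1, h2⟩ := hp
    rw [lowSet, Finset.mem_filter] at h2
    have hu : u'.val < 2*n := h2.2
    have he : emb n ⟨u'.val, hu⟩ = u' := Fin.ext rfl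
    dsimp only
    rw [← he, ctr_lift2 h1, lift2_av]
  · intro σ hσ
    rw [Finset.mem_filter, mem_PMset] at hσ
    exact hFG σ hσ.1 hσ.2

lemma Pn_succ : Pn (n+1) = (2*n+1) * Pn n := by
  have h1 : Pn (n+1) = ∑ σ ∈ PMset (n+1), 1 := by rw [Pn, Finset.card_eq_sum_ones]
  rw [h1, sum_split, sumA, sumB n _ (fun _ => 1) (fun _ _ _ => rfl)]
  rw [Finset.sum_const, Finset.sum_const, Finset.card_product, card_lowSet]
  rw [Pn, smul_eq_mul, smul_eq_mul, mul_one, mul_one]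
  ring

lemma Sn_succ : Sn (n+1) = (2*n+1) * Sn n + Pn n := by
  have hA : ∀ σ' ∈ PMset n, Xc (n+1) (lift1 n σ') = Xc n σ' + 1 := by
    intro σ' hσ'
    rw [mem_PMset] at hσ'
    rw [Xc, Xc, branch1_card (isPM_lift1 hσ') lift1_av, res_lift1 hσ']
  have hB : ∀ σ, isPM (n+1) σ → ¬ σ (av n) = bv n → Xc (n+1) σ = Xc n (ctr n σ) := by
    intro σ h1 h2
    rw [Xc, Xc, branch2_card h1 h2]
  rw [Sn, sum_split, sumA, sumB n _ (Xc n) hB]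
  rw [Finset.sum_congr rfl hA]
  have e1 : ∑ σ' ∈ PMset n, (Xc n σ' + 1) = Sn n + Pn n := by
    rw [Finset.sum_add_distrib, Finset.sum_const, smul_eq_mul, mul_one, Sn, Pn]
  have e2 : ∑ p ∈ PMset n ×ˢ lowSet n, Xc n p.1 = 2*n * Sn n := by
    rw [Finset.sum_product]
    simp only [Finset.sum_const, card_lowSet, smul_eq_mul]
    rw [← Finset.mul_sum, Sn]
  rw [e1, e2]
  ring

end Recursion


/-! ### The expected number of components -/

noncomputable def harm (n : ℕ) : ℝ := ∑ k ∈ Finset.range n, 1/(2*(k:ℝ)+1)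

lemma Sn_eq (n : ℕ) : (Sn n : ℝ) = harm n * Pn n := by
  induction n with
  | zero => simp [Sn_zero, harm]
  | succ n ih =>
    have h21 : (2*(n:ℝ)+1) ≠ 0 := by positivity
    rw [Sn_succ, Pn_succ, harm, Finset.sum_range_succ, ← harm]
    push_cast
    rw [ih]
    field_simp

lemma Pn_pos (n : ℕ) : 0 < Pn n := by
  rw [Pn]
  apply Finset.card_pos.mpr
  exact ⟨m0 n, mem_PMset.mpr (isPM_m0 n)⟩

lemma aux_log_sum (m : ℕ) :
    ∑ k ∈ Finset.range m, 1/(2*((k:ℝ)+1)+1) ≤ (1/2) * Real.log (2*m+1) := by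
  induction m with
  | zero => simp
  | succ m ih =>
    rw [Finset.sum_range_succ]
    have h1 : (0:ℝ) < 2*(m:ℝ)+1 := by positivity
    have h3 : (0:ℝ) < 2*(m:ℝ)+3 := by positivity
    have hlog : Real.log (2*(m:ℝ)+1) - Real.log (2*(m:ℝ)+3) ≤ -(2/(2*(m:ℝ)+3)) := by
      have := Real.log_le_sub_one_of_pos (show (0:ℝ) < (2*(m:ℝ)+1)/(2*(m:ℝ)+3) by positivity)
      rw [Real.log_div (by positivity) (by positivity)] at this
      have h4 : (2*(m:ℝ)+1)/(2*(m:ℝ)+3) - 1 = -(2/(2*(m:ℝ)+3)) := by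
        field_simp
        norm_num
      rw [h4] at this
      exact this
    have key : 1/(2*((m:ℝ)+1)+1) ≤ (1/2) * (Real.log (2*(m:ℝ)+3) - Real.log (2*(m:ℝ)+1)) := by
      have e1 : 2/(2*(m:ℝ)+3) ≤ Real.log (2*(m:ℝ)+3) - Real.log (2*(m:ℝ)+1) := by linarith
      have e2 : 2/(2*(m:ℝ)+3) = 2*(1/(2*(m:ℝ)+3)) := by ring
      rw [show 2*((m:ℝ)+1)+1 = 2*(m:ℝ)+3 by ring]
      rw [e2] at e1
      linarith
    have hcast : (2*((m:ℕ)+1):ℝ)+1 = 2*(m:ℝ)+3 := by push_cast; ring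
    calc ∑ k ∈ Finset.range m, 1/(2*((k:ℝ)+1)+1) + 1/(2*((m:ℝ)+1)+1)
        ≤ (1/2) * Real.log (2*m+1) + (1/2) * (Real.log (2*(m:ℝ)+3) - Real.log (2*(m:ℝ)+1)) :=
          add_le_add ih key
      _ = (1/2) * Real.log (2*(m:ℝ)+3) := by ring
      _ ≤ (1/2) * Real.log (2*((m+1:ℕ):ℝ)+1) := by
          push_cast
          rw [show 2*((m:ℝ)+1)+1 = 2*(m:ℝ)+3 by ring]

lemma harm_le (n : ℕ) (hn : 1 ≤ n) : harm n ≤ 2 + Real.log n := by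
  obtain ⟨m, rfl⟩ := Nat.exists_eq_add_of_le hn
  rw [Nat.add_comm 1 m]
  rw [harm, Finset.sum_range_succ']
  simp only [Nat.cast_zero, mul_zero, zero_add]
  have h1 : ∑ k ∈ Finset.range m, 1/(2*((k:ℝ)+1)+1) ≤ (1/2) * Real.log (2*(m:ℝ)+1) := by
    have := aux_log_sum m
    push_cast at this ⊢
    linarith
  have h2 : Real.log (2*(m:ℝ)+1) ≤ Real.log 2 + Real.log ((m:ℝ)+1) := by
    rw [← Real.log_mul (by norm_num) (by positivity)]
    apply Real.log_le_log (by positivity)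
    nlinarith [Nat.cast_nonneg (α := ℝ) m]
  have h3 : Real.log 2 ≤ 1 := by
    have := Real.log_le_sub_one_of_pos (show (0:ℝ) < 2 by norm_num)
    linarith
  have h4 : (0:ℝ) ≤ Real.log ((m:ℝ)+1) := by
    apply Real.log_nonneg
    have := Nat.cast_nonneg (α := ℝ) m
    linarith
  push_cast
  rw [show (1:ℝ)/1 = 1 by norm_num]
  linarith


/-! ### Markov and the final limit -/

noncomputable def badset (n : ℕ) : Finset (Fin (2*n) → Fin (2*n)) :=
  (PMset n).filter (fun σ => ¬ ((Xc n σ : ℝ) ≤ (Real.log n)^2))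

noncomputable def goodset (n : ℕ) : Finset (Fin (2*n) → Fin (2*n)) :=
  (PMset n).filter (fun σ => ((Xc n σ : ℝ) ≤ (Real.log n)^2))

lemma good_add_bad (n : ℕ) : (goodset n).card + (badset n).card = Pn n := by
  rw [goodset, badset, Pn]
  exact Finset.card_filter_add_card_filter_not _

lemma markov (n : ℕ) :
    ((badset n).card : ℝ) * (Real.log n)^2 ≤ (Sn n : ℝ) := by
  have h1 : (Sn n : ℝ) = ∑ σ ∈ PMset n, (Xc n σ : ℝ) := by
    rw [Sn]
    push_cast
    rfl
  rw [h1]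
  have h2 : ∑ σ ∈ badset n, (Xc n σ : ℝ) ≤ ∑ σ ∈ PMset n, (Xc n σ : ℝ) := by
    apply Finset.sum_le_sum_of_subset_of_nonneg (Finset.filter_subset _ _)
    intro i _ _
    positivity
  have h3 : ((badset n).card : ℝ) * (Real.log n)^2 ≤ ∑ σ ∈ badset n, (Xc n σ : ℝ) := by
    have := Finset.card_nsmul_le_sum (badset n) (fun σ => (Xc n σ : ℝ)) ((Real.log n)^2)
      (fun i hi => by
        rw [badset, Finset.mem_filter] at hi
        exact (not_le.mp hi.2).le)
    rwa [nsmul_eq_mul] at this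
  linarith

theorem few_components_whp :
    Filter.Tendsto prFewComponents Filter.atTop (nhds 1) := by
  have h0 : Filter.Tendsto (fun n : ℕ => Real.log n) Filter.atTop Filter.atTop :=
    Real.tendsto_log_atTop.comp tendsto_natCast_atTop_atTop
  have hsq : Filter.Tendsto (fun n : ℕ => (Real.log n)^2) Filter.atTop Filter.atTop := by
    have := h0.atTop_mul_atTop₀ h0
    simpa [pow_two] using this
  have t1 : Filter.Tendsto (fun n : ℕ => 2/(Real.log n)^2) Filter.atTop (nhds 0) :=
    (tendsto_const_nhds : Filter.Tendsto (fun _ : ℕ => (2:ℝ)) Filter.atTop (nhds 2)).div_atTop hsq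
  have t2 : Filter.Tendsto (fun n : ℕ => 1/(Real.log n)) Filter.atTop (nhds 0) :=
    (tendsto_const_nhds : Filter.Tendsto (fun _ : ℕ => (1:ℝ)) Filter.atTop (nhds 1)).div_atTop h0
  have t3 : Filter.Tendsto (fun n : ℕ => (2 + Real.log n)/(Real.log n)^2)
      Filter.atTop (nhds 0) := by
    have hev : ∀ᶠ n : ℕ in Filter.atTop,
        2/(Real.log n)^2 + 1/(Real.log n) = (2 + Real.log n)/(Real.log n)^2 := by
      filter_upwards [Filter.eventually_ge_atTop 2] with n hn
      have hl : 0 < Real.log n := Real.log_pos (by exact_mod_cast by omega)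
      field_simp
    have := t1.add t2
    rw [show (0:ℝ) + 0 = 0 from by ring] at this
    exact Filter.Tendsto.congr' hev this
  have tlo : Filter.Tendsto (fun n : ℕ => 1 - (2 + Real.log n)/(Real.log n)^2)
      Filter.atTop (nhds 1) := by
    have := (tendsto_const_nhds :
      Filter.Tendsto (fun _ : ℕ => (1:ℝ)) Filter.atTop (nhds 1)).sub t3
    simpa using this
  refine tendsto_of_tendsto_of_tendsto_of_le_of_le' tlo tendsto_const_nhds ?_ ?_
  · -- lower bound eventually
    filter_upwards [Filter.eventually_ge_atTop 2] with n hn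
    have hPn : (0:ℝ) < Pn n := by exact_mod_cast Pn_pos n
    have hl : 0 < Real.log n := Real.log_pos (by exact_mod_cast by omega)
    have hL : 0 < (Real.log n)^2 := by positivity
    have hharm : harm n ≤ 2 + Real.log n := harm_le n (by omega)
    have hSn : (Sn n : ℝ) ≤ (2 + Real.log n) * Pn n := by
      rw [Sn_eq]
      apply mul_le_mul_of_nonneg_right hharm (le_of_lt hPn)
    have hbad : ((badset n).card : ℝ) / Pn n ≤ (2 + Real.log n)/(Real.log n)^2 := by
      rw [div_le_div_iff₀ hPn hL]
      calc ((badset n).card : ℝ) * (Real.log n)^2 ≤ (Sn n : ℝ) := markov n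
        _ ≤ (2 + Real.log n) * Pn n := hSn
    have hgood : ((goodset n).card : ℝ) = (Pn n : ℝ) - (badset n).card := by
      have := good_add_bad n
      have : ((goodset n).card : ℝ) + (badset n).card = Pn n := by exact_mod_cast this
      linarith
    have hpr : prFewComponents n = ((goodset n).card : ℝ) / Pn n := by
      rw [prFewComponents, goodset, PMset, Pn, PMset, Finset.filter_filter]
      rfl
    rw [hpr, hgood, sub_div, div_self (ne_of_gt hPn)]
    have : ((badset n).card : ℝ) / Pn n ≤ (2 + Real.log n)/(Real.log n)^2 := hbad
    linarith
  · -- upper bound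
    filter_upwards with n
    have hPn : (0:ℝ) < Pn n := by exact_mod_cast Pn_pos n
    have hpr : prFewComponents n = ((goodset n).card : ℝ) / Pn n := by
      rw [prFewComponents, goodset, PMset, Pn, PMset, Finset.filter_filter]
      rfl
    rw [hpr]
    rw [div_le_one hPn]
    have : (goodset n).card ≤ Pn n := by
      rw [goodset, Pn]
      exact Finset.card_filter_le _ _
    exact_mod_cast this


end Stmt11
end
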